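/- arXiv:2104.10250 — 9 statements merged into one kernel-verified Lean document; each statement's English description precedes it below -/
import Mathlib

section
/- Let N ∈ ℕ and let α, β, γ ∈ ℕ be mutually coprime (gcd(α,β) = gcd(α,γ) = gcd(β,γ) = 1). Then G_N(γ, αβ) = G_N(βγ, α) · G_N(αγ, β). -/
open Complex Finset Filter
open scoped Classical

/-- Number of partitions of `n`. -/
noncomputable def partitionCount (n : ℕ) : ℕ := Fintype.card (Nat.Partition n)

/-- `P(x)` for rational `x`: the number of partitions of `x` when `x` is a
nonnegative integer, and `0` otherwise. -/
noncomputable def Pq (x : ℚ) : ℕ :=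
  if h : ∃ m : ℕ, (m : ℚ) = x then partitionCount h.choose else 0

/-- The quadratic form `θ_k(x) = Σ x_i² + Σ_{i<j} x_i x_j` on `ℤ^k`. -/
def thetaInt (k : ℕ) (x : Fin k → ℤ) : ℤ :=
  (∑ i, x i ^ 2) + ∑ i, ∑ j ∈ Finset.Ioi i, x i * x j

/-- `r_k(n)`: the number of `x ∈ ℤ^k` with `θ_k(x) = n`. -/
noncomputable def rTheta (k n : ℕ) : ℕ :=
  Nat.card {x : Fin k → ℤ // thetaInt k x = (n : ℤ)}

/-- `V_r(m)`: the coefficient of `q^m` in `1/(q;q)_∞^r`. -/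
noncomputable def Vpart (r m : ℕ) : ℕ :=
  ∑ x ∈ Finset.Nat.antidiagonalTuple r m, ∏ i, partitionCount (x i)

/-- `cφ_N(n)`, the number of `N`-colored generalized Frobenius partitions of `n`. -/
noncomputable def cphi (N n : ℕ) : ℕ :=
  ∑ p ∈ Finset.HasAntidiagonal.antidiagonal n, rTheta (N - 1) p.1 * Vpart N p.2

/-- The quadratic Gauss sum `G_k(a,c) = Σ_{x ∈ (ℤ/cℤ)^k} e^{2πi a θ_k(x)/c}`,
with the sum taken over the representatives `0,…,c−1` of `ℤ/cℤ`. -/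
noncomputable def GaussG (k : ℕ) (a : ℤ) (c : ℕ) : ℂ :=
  ∑ x : Fin k → Fin c,
    Complex.exp (2 * Real.pi * I * a * thetaInt k (fun i => (x i : ℤ)) / c)


noncomputable def Ec (c : ℕ) (t : ℤ) : ℂ := Complex.exp (2 * Real.pi * I * t / c)

lemma Ec_add (c : ℕ) (s t : ℤ) : Ec c (s + t) = Ec c s * Ec c t := by
  rw [Ec, Ec, Ec, ← Complex.exp_add]; congr 1; push_cast; ring

lemma Ec_mul_self (c : ℕ) (hc : c ≠ 0) (k : ℤ) : Ec c (c * k) = 1 := by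
  have hc' : (c : ℂ) ≠ 0 := Nat.cast_ne_zero.mpr hc
  have : (2 : ℂ) * Real.pi * I * (c * k) / c = k * (2 * Real.pi * I) := by
    field_simp
  rw [Ec]; push_cast
  rw [this, Complex.exp_int_mul_two_pi_mul_I]

lemma Ec_congr (c : ℕ) (hc : c ≠ 0) {s t : ℤ} (h : (s : ZMod c) = (t : ZMod c)) :
    Ec c s = Ec c t := by
  rw [ZMod.intCast_eq_intCast_iff] at h
  obtain ⟨k, hk⟩ := Int.modEq_iff_dvd.mp h
  have : t = s + c * k := by omega
  rw [this, Ec_add, Ec_mul_self c hc, mul_one]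

lemma Ec_cancel (a b : ℕ) (ha : a ≠ 0) (hb : b ≠ 0) (t : ℤ) :
    Ec (a * b) (b * t) = Ec a t := by
  rw [Ec, Ec]
  congr 1
  have ha' : (a : ℂ) ≠ 0 := Nat.cast_ne_zero.mpr ha
  have hb' : (b : ℂ) ≠ 0 := Nat.cast_ne_zero.mpr hb
  push_cast
  field_simp

lemma theta_linear (k : ℕ) (a b : ℤ) (u v : Fin k → ℤ) :
    thetaInt k (fun i => a * u i + b * v i) =
      a ^ 2 * thetaInt k u + b ^ 2 * thetaInt k v +
        a * b * ((∑ i, 2 * (u i * v i)) +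
          ∑ i, ∑ j ∈ Finset.Ioi i, (u i * v j + u j * v i)) := by
  have e1 : ∀ i : Fin k, (a * u i + b * v i) ^ 2 =
      a ^ 2 * u i ^ 2 + b ^ 2 * v i ^ 2 + a * b * (2 * (u i * v i)) := fun i => by ring
  have e2 : ∀ i j : Fin k, (a * u i + b * v i) * (a * u j + b * v j) =
      a ^ 2 * (u i * u j) + b ^ 2 * (v i * v j) + a * b * (u i * v j + u j * v i) :=
    fun i j => by ring
  simp only [thetaInt, e1, e2, Finset.sum_add_distrib, ← Finset.mul_sum]
  ring

lemma theta_congr (k c : ℕ) (x y : Fin k → ℤ) (h : ∀ i, ((x i : ZMod c)) = (y i : ZMod c)) :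
    ((thetaInt k x : ℤ) : ZMod c) = ((thetaInt k y : ℤ) : ZMod c) := by
  simp only [thetaInt]
  push_cast
  congr 1
  · exact Finset.sum_congr rfl fun i _ => by rw [h i]
  · exact Finset.sum_congr rfl fun i _ => Finset.sum_congr rfl fun j _ => by rw [h i, h j]

/-- `Fin c ≃ ZMod c`. -/
def finZMod (c : ℕ) [NeZero c] : Fin c ≃ ZMod c where
  toFun x := ((x : ℕ) : ZMod c)
  invFun y := ⟨y.val, y.val_lt⟩
  left_inv x := Fin.ext (ZMod.val_cast_of_lt x.isLt)
  right_inv y := ZMod.natCast_rightInverse y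

lemma GaussG_eq_zmod (k : ℕ) (a : ℤ) (c : ℕ) [NeZero c] :
    GaussG k a c = ∑ x : Fin k → ZMod c, Ec c (a * thetaInt k (fun i => ((x i).val : ℤ))) := by
  rw [GaussG]
  refine Fintype.sum_equiv (Equiv.piCongrRight fun _ : Fin k => finZMod c) _ _ fun x => ?_
  rw [Ec]
  congr 1
  have hv : (fun i => ((((Equiv.piCongrRight fun _ : Fin k => finZMod c) x) i).val : ℤ))
      = fun i => ((x i : ℕ) : ℤ) := by
    funext i
    simp [finZMod, ZMod.val_cast_of_lt (x i).isLt]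
  rw [hv]
  push_cast
  ring

/-- The CRT map. -/
def crtFun (α β : ℕ) [NeZero α] [NeZero β] (p : ZMod α × ZMod β) : ZMod (α * β) :=
  (((β : ℤ) * (p.1.val : ℤ) + (α : ℤ) * (p.2.val : ℤ)) : ZMod (α * β))

lemma crt_injective (α β : ℕ) [NeZero α] [NeZero β] (hαβ : Nat.Coprime α β) :
    Function.Injective (crtFun α β) := by
  rintro ⟨u, v⟩ ⟨u', v'⟩ h
  simp only [crtFun] at h
  have h2 : ((((β : ℤ) * (u.val : ℤ) + (α : ℤ) * (v.val : ℤ)) : ℤ) : ZMod (α * β)) =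
      ((((β : ℤ) * (u'.val : ℤ) + (α : ℤ) * (v'.val : ℤ)) : ℤ) : ZMod (α * β)) := by
    push_cast
    exact_mod_cast h
  rw [ZMod.intCast_eq_intCast_iff] at h2
  replace h := h2
  have hA : ((β : ℤ) * (u.val : ℤ) + (α : ℤ) * (v.val : ℤ)) ≡
      ((β : ℤ) * (u'.val : ℤ) + (α : ℤ) * (v'.val : ℤ)) [ZMOD α] :=
    h.of_dvd (by push_cast; exact Dvd.intro β rfl)
  have hB : ((β : ℤ) * (u.val : ℤ) + (α : ℤ) * (v.val : ℤ)) ≡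
      ((β : ℤ) * (u'.val : ℤ) + (α : ℤ) * (v'.val : ℤ)) [ZMOD β] :=
    h.of_dvd (by push_cast; exact Dvd.intro_left α rfl)
  rw [← ZMod.intCast_eq_intCast_iff] at hA hB
  push_cast at hA hB
  simp only [ZMod.natCast_self, zero_mul, add_zero, mul_zero, zero_add,
    ZMod.natCast_val, ZMod.cast_id] at hA hB
  have hu : u = u' := by
    have hβu : IsUnit ((β : ZMod α)) := (ZMod.isUnit_iff_coprime β α).mpr hαβ.symm
    exact hβu.mul_left_cancel hA
  have hv : v = v' := by
    have hαu : IsUnit ((α : ZMod β)) := (ZMod.isUnit_iff_coprime α β).mpr hαβ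
    exact hαu.mul_left_cancel hB
  simp [hu, hv]

noncomputable def crtEquiv (α β : ℕ) [NeZero α] [NeZero β] (hαβ : Nat.Coprime α β) :
    (ZMod α × ZMod β) ≃ ZMod (α * β) :=
  Equiv.ofBijective (crtFun α β)
    ((Fintype.bijective_iff_injective_and_card _).mpr
      ⟨crt_injective α β hαβ, by simp [ZMod.card]⟩)

lemma sum_prod_mul {A B : Type} [Fintype A] [Fintype B] (f : A → ℂ) (g : B → ℂ) :
    ∑ p : A × B, f p.1 * g p.2 = (∑ a, f a) * (∑ b, g b) := by
  rw [Fintype.sum_prod_type, ← Finset.sum_mul_sum]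

theorem stmt5 (N : ℕ) (hN : 0 < N) (α β γ : ℕ) (hα : 0 < α) (hβ : 0 < β) (hγ : 0 < γ)
    (hαβ : Nat.Coprime α β) (hαγ : Nat.Coprime α γ) (hβγ : Nat.Coprime β γ) :
    GaussG N (γ : ℤ) (α * β) = GaussG N ((β : ℤ) * γ) α * GaussG N ((α : ℤ) * γ) β := by
  haveI : NeZero α := ⟨hα.ne'⟩
  haveI : NeZero β := ⟨hβ.ne'⟩
  haveI : NeZero (α * β) := ⟨(Nat.mul_pos hα hβ).ne'⟩
  rw [GaussG_eq_zmod, GaussG_eq_zmod, GaussG_eq_zmod]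
  set E : ((Fin N → ZMod α) × (Fin N → ZMod β)) ≃ (Fin N → ZMod (α * β)) :=
    (Equiv.arrowProdEquivProdArrow (Fin N) (fun _ => ZMod α) (fun _ => ZMod β)).symm.trans
      (Equiv.piCongrRight fun _ : Fin N => crtEquiv α β hαβ) with hE
  have hkey : ∀ p : ((Fin N → ZMod α) × (Fin N → ZMod β)),
      Ec α ((β : ℤ) * γ * thetaInt N fun i => ((p.1 i).val : ℤ)) *
        Ec β ((α : ℤ) * γ * thetaInt N fun i => ((p.2 i).val : ℤ)) =
      Ec (α * β) ((γ : ℤ) * thetaInt N fun i => (((E p) i).val : ℤ)) := by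
    rintro ⟨u, v⟩
    have hEp : ∀ i, E (u, v) i = crtFun α β (u i, v i) := fun i => rfl
    set ub : Fin N → ℤ := fun i => ((u i).val : ℤ) with hub
    set vb : Fin N → ℤ := fun i => ((v i).val : ℤ) with hvb
    set xb : Fin N → ℤ := fun i => (((E (u, v)) i).val : ℤ) with hxb
    -- congruence of thetas
    have h1 : ∀ i, ((xb i : ZMod (α * β))) = (((β : ℤ) * ub i + (α : ℤ) * vb i : ℤ) : ZMod (α * β)) := by
      intro i
      have : ((xb i : ZMod (α * β))) = E (u, v) i := by
        simp [hxb, ZMod.natCast_val, ZMod.intCast_cast, ZMod.cast_id]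
      rw [this, hEp i]
      simp only [crtFun, hub, hvb]
      push_cast
      ring
    have h2 : ((thetaInt N xb : ℤ) : ZMod (α * β)) =
        ((thetaInt N (fun i => (β : ℤ) * ub i + (α : ℤ) * vb i) : ℤ) : ZMod (α * β)) :=
      theta_congr N (α * β) _ _ h1
    rw [theta_linear] at h2
    -- reduce mod αβ
    have h3 : (((γ : ℤ) * thetaInt N xb : ℤ) : ZMod (α * β)) =
        (((γ : ℤ) * ((β : ℤ) ^ 2 * thetaInt N ub) + (γ : ℤ) * ((α : ℤ) ^ 2 * thetaInt N vb) : ℤ) :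
          ZMod (α * β)) := by
      push_cast at h2 ⊢
      have hz : ((β : ZMod (α * β)) * (α : ZMod (α * β))) = 0 := by
        have := ZMod.natCast_self (α * β)
        push_cast at this
        linear_combination this
      rw [h2, hz, zero_mul, add_zero]
      ring
    have h4 := Ec_congr (α * β) (Nat.mul_pos hα hβ).ne' h3
    rw [h4, Ec_add]
    congr 1
    · have : (γ : ℤ) * ((β : ℤ) ^ 2 * thetaInt N ub) = (β : ℤ) * ((β : ℤ) * γ * thetaInt N ub) := by
        ring
      rw [this, Ec_cancel α β hα.ne' hβ.ne']
    · have : (γ : ℤ) * ((α : ℤ) ^ 2 * thetaInt N vb) = (α : ℤ) * ((α : ℤ) * γ * thetaInt N vb) := by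
        ring
      rw [this, show α * β = β * α from Nat.mul_comm α β, Ec_cancel β α hβ.ne' hα.ne']
  rw [← Fintype.sum_equiv E _ _ hkey]
  exact sum_prod_mul
    (fun u : Fin N → ZMod α => Ec α ((β : ℤ) * (γ : ℤ) * thetaInt N fun i => ((u i).val : ℤ)))
    (fun v : Fin N → ZMod β => Ec β ((α : ℤ) * (γ : ℤ) * thetaInt N fun i => ((v i).val : ℤ)))
end

section
/- Let p be an odd prime, let a ∈ ℕ with gcd(a,p) = 1, and let N ∈ ℕ. Then Σ_{x ∈ (ℤ/pℤ)^N} e^{2πi·a(θ_N(x) − x_N²)/p} equals p if N ≤ 2, and equals p · G_{N−2}(a,p) if N > 2. -/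
open Complex Finset Filter
open scoped Classical

def csEmb (k : ℕ) : Fin k ↪ Fin (k+1) := ⟨Fin.castSucc, Fin.castSucc_injective k⟩

@[simp] lemma csEmb_apply (k : ℕ) (j : Fin k) : csEmb k j = j.castSucc := rfl

lemma theta_snoc (k : ℕ) (y : Fin k → ℤ) (t : ℤ) :
    thetaInt (k+1) (Fin.snoc y t) = thetaInt k y + t^2 + t * ∑ i, y i := by
  have hIoi : ∀ (h : Fin (k+1) → ℤ) (i' : Fin k),
      ∑ j ∈ Finset.Ioi (Fin.castSucc i'), h j
        = (∑ j ∈ Finset.Ioi i', h (Fin.castSucc j)) + h (Fin.last k) := by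
    intro h i'
    have hins : Finset.Ioi (Fin.castSucc i')
        = insert (Fin.last k) ((Finset.Ioi i').map (csEmb k)) := by
      ext j
      induction j using Fin.lastCases with
      | last => simp [Fin.castSucc_lt_last]
      | cast j =>
          simp [Fin.castSucc_lt_castSucc_iff, (Fin.castSucc_lt_last j).ne,
            (Fin.castSucc_lt_last j).ne', Fin.castSucc_inj]
    have hnm : Fin.last k ∉ (Finset.Ioi i').map (csEmb k) := by
      simp only [Finset.mem_map, not_exists, csEmb_apply]
      rintro j ⟨-, hj⟩
      exact absurd hj (Fin.castSucc_lt_last j).ne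
    rw [hins, Finset.sum_insert hnm, Finset.sum_map]
    simp [add_comm]
  have hlastIoi : Finset.Ioi (Fin.last k) = ∅ := by
    ext j; simpa using (Fin.le_last j).not_gt
  unfold thetaInt
  rw [Fin.sum_univ_castSucc, Fin.sum_univ_castSucc]
  simp only [Fin.snoc_castSucc, Fin.snoc_last, hlastIoi, Finset.sum_empty]
  have key : ∀ i' : Fin k, ∑ j ∈ Finset.Ioi (Fin.castSucc i'),
      y i' * (Fin.snoc y t : Fin (k+1) → ℤ) j
      = (∑ j ∈ Finset.Ioi i', y i' * y j) + y i' * t := by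
    intro i'
    rw [hIoi]
    simp [Fin.snoc_castSucc, Fin.snoc_last]
  rw [Finset.sum_congr rfl (fun i _ => key i), Finset.sum_add_distrib, ← Finset.sum_mul]
  ring


noncomputable def ep (p a : ℕ) (n : ℤ) : ℂ :=
  Complex.exp (2 * Real.pi * Complex.I * a * n / p)

lemma ep_add (p a : ℕ) (m n : ℤ) : ep p a (m + n) = ep p a m * ep p a n := by
  rw [ep, ep, ep, ← Complex.exp_add]
  congr 1
  push_cast
  ring

lemma ep_dvd (p a : ℕ) (hp : p ≠ 0) {n : ℤ} (h : (p : ℤ) ∣ n) : ep p a n = 1 := by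
  obtain ⟨k, rfl⟩ := h
  rw [ep]
  have hp0 : (p : ℂ) ≠ 0 := Nat.cast_ne_zero.mpr hp
  have harg : 2 * (Real.pi : ℂ) * Complex.I * a * (((p : ℤ) * k : ℤ) : ℂ) / p
      = ((a * k : ℤ) : ℂ) * (2 * Real.pi * Complex.I) := by
    push_cast
    field_simp
  rw [harg, Complex.exp_int_mul_two_pi_mul_I]

lemma ep_congr (p a : ℕ) (hp : p ≠ 0) {m n : ℤ} (h : (p : ℤ) ∣ m - n) :
    ep p a m = ep p a n := by
  have : m = n + (m - n) := by ring
  rw [this, ep_add, ep_dvd p a hp h, mul_one]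

lemma ep_zero (p a : ℕ) : ep p a 0 = 1 := by
  simp [ep]

lemma sum_ep (p : ℕ) (hp : p.Prime) (a : ℕ) (ha : Nat.Coprime a p) (S : ℤ) :
    ∑ t : Fin p, ep p a (t * S) = if (p : ℤ) ∣ S then (p : ℂ) else 0 := by
  have hp0 : (p : ℂ) ≠ 0 := Nat.cast_ne_zero.mpr hp.ne_zero
  have h2pi : (2 * (Real.pi : ℂ) * Complex.I) ≠ 0 := by
    simp [Real.pi_ne_zero, Complex.I_ne_zero]
  have hpow : ∀ t : ℕ, ep p a (t * S) = (ep p a S) ^ t := by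
    intro t
    rw [ep, ep, ← Complex.exp_nat_mul]
    congr 1
    push_cast
    ring
  have hone : ep p a S = 1 ↔ (p : ℤ) ∣ (a : ℤ) * S := by
    rw [ep, Complex.exp_eq_one_iff]
    constructor
    · rintro ⟨n, hn⟩
      have h3 : (2 * (Real.pi : ℂ) * Complex.I) * ((a : ℂ) * S)
          = (2 * (Real.pi : ℂ) * Complex.I) * ((n : ℂ) * p) := by
        field_simp at hn
        linear_combination (2 * (Real.pi : ℂ) * Complex.I) * hn
      have h4 : ((a : ℤ) * S : ℂ) = ((n * p : ℤ) : ℂ) := by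
        push_cast
        exact mul_left_cancel₀ h2pi h3
      have h5 : (a : ℤ) * S = n * p := by exact_mod_cast h4
      exact ⟨n, by linarith⟩
    · rintro ⟨k, hk⟩
      refine ⟨k, ?_⟩
      have h4 : ((a : ℤ) * S : ℂ) = (((p : ℤ) * k : ℤ) : ℂ) := by exact_mod_cast congrArg (Int.cast : ℤ → ℂ) hk
      push_cast at h4
      field_simp
      linear_combination h4
  have hdvd_iff : (p : ℤ) ∣ (a : ℤ) * S ↔ (p : ℤ) ∣ S := by
    constructor
    · intro h
      rcases (Int.Prime.dvd_mul' (by exact_mod_cast hp) h) with h' | h'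
      · exfalso
        have : p ∣ a := by exact_mod_cast h'
        exact (Nat.Prime.coprime_iff_not_dvd hp).mp ha.symm this
      · exact h'
    · exact fun h => Dvd.dvd.mul_left h _
  by_cases hd : (p : ℤ) ∣ S
  · have h1 : ep p a S = 1 := hone.mpr (hdvd_iff.mpr hd)
    simp only [hd, if_true]
    calc ∑ t : Fin p, ep p a (t * S) = ∑ t : Fin p, (1 : ℂ) := by
          refine Finset.sum_congr rfl fun t _ => ?_
          rw [show ((t : Fin p) : ℤ) = ((t : ℕ) : ℤ) from rfl, hpow, h1, one_pow]
      _ = p := by simp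
  · have h1 : ep p a S ≠ 1 := fun h => hd (hdvd_iff.mp (hone.mp h))
    simp only [hd, if_false]
    have hgeom : ∑ t ∈ Finset.range p, (ep p a S) ^ t
        = ((ep p a S) ^ p - 1) / (ep p a S - 1) := geom_sum_eq h1 p
    have hpp : (ep p a S) ^ p = 1 := by
      rw [ep, ← Complex.exp_nat_mul]
      have : (p : ℂ) * (2 * Real.pi * Complex.I * a * S / p)
          = ((a * S : ℤ) : ℂ) * (2 * Real.pi * Complex.I) := by
        push_cast
        field_simp
      rw [this, Complex.exp_int_mul_two_pi_mul_I]
    calc ∑ t : Fin p, ep p a (t * S) = ∑ t ∈ Finset.range p, (ep p a S) ^ t := by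
          rw [← Fin.sum_univ_eq_sum_range (fun t => (ep p a S) ^ t) p]
          exact Finset.sum_congr rfl fun t _ => hpow t
      _ = 0 := by rw [hgeom, hpp, sub_self, zero_div]






lemma fin_eq_of_dvd (p : ℕ) (hp : 0 < p) (s u : Fin p)
    (h : (p : ℤ) ∣ (s : ℤ) - (u : ℤ)) : s = u := by
  obtain ⟨k, hk⟩ := h
  have hs : ((s : ℕ) : ℤ) < p := by exact_mod_cast s.isLt
  have hu : ((u : ℕ) : ℤ) < p := by exact_mod_cast u.isLt
  have hs0 : (0 : ℤ) ≤ ((s : ℕ) : ℤ) := Int.natCast_nonneg _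
  have hu0 : (0 : ℤ) ≤ ((u : ℕ) : ℤ) := Int.natCast_nonneg _
  have hp' : (0 : ℤ) < p := by exact_mod_cast hp
  have hklt : k < 1 := by
    have h1 : (p : ℤ) * k < (p : ℤ) * 1 := by
      rw [mul_one]
      omega
    exact lt_of_mul_lt_mul_left h1 (le_of_lt hp')
  have hkgt : (-1 : ℤ) < k := by
    have h1 : (p : ℤ) * (-1) < (p : ℤ) * k := by
      have : (p : ℤ) * (-1) = -(p : ℤ) := by ring
      omega
    exact lt_of_mul_lt_mul_left h1 (le_of_lt hp')
  have hk0 : k = 0 := by omega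
  subst hk0
  apply Fin.ext
  omega

lemma filter_sum (p : ℕ) (hp : p.Prime) (a : ℕ) (k : ℕ) :
    ∑ y ∈ Finset.univ.filter
        (fun y : Fin (k+1) → Fin p => (p : ℤ) ∣ ∑ i, ((y i : ℤ))),
        ep p a (thetaInt (k+1) (fun i => (y i : ℤ)))
      = ∑ z : Fin k → Fin p, ep p a (thetaInt k (fun i => (z i : ℤ))) := by
  have hp0 : (0 : ℤ) < p := by exact_mod_cast hp.pos
  have hpne : p ≠ 0 := hp.ne_zero
  set tz : (Fin k → Fin p) → Fin p := fun z =>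
    ⟨((-∑ i, ((z i : ℤ))) % p).toNat, by
      have h0 : 0 ≤ (-∑ i, ((z i : ℤ))) % p := Int.emod_nonneg _ (by exact_mod_cast hpne)
      have h1 : (-∑ i, ((z i : ℤ))) % p < p := Int.emod_lt_of_pos _ hp0
      omega⟩ with htz
  have htzval : ∀ z : Fin k → Fin p, ((tz z : Fin p) : ℤ) = (-∑ i, ((z i : ℤ))) % p := by
    intro z
    simp only [htz]
    have h0 : 0 ≤ (-∑ i, ((z i : ℤ))) % p := Int.emod_nonneg _ (by exact_mod_cast hpne)
    exact Int.toNat_of_nonneg h0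
  have hdv : ∀ z : Fin k → Fin p, (p : ℤ) ∣ ((tz z : Fin p) : ℤ) + ∑ i, ((z i : ℤ)) := by
    intro z
    set S := ∑ i, ((z i : ℤ))
    refine ⟨-((-S) / p), ?_⟩
    have := Int.emod_add_mul_ediv (-S) p
    rw [htzval]
    linarith
  have hcomp : ∀ (z : Fin k → Fin p) (t : Fin p),
      (fun i => ((Fin.snoc z t : Fin (k+1) → Fin p) i : ℤ))
        = Fin.snoc (fun i => ((z i : ℤ))) ((t : ℤ)) := by
    intro z t
    exact Fin.comp_snoc (fun v : Fin p => (v : ℤ)) z t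
  have hsum : ∀ (z : Fin k → Fin p) (t : Fin p),
      (∑ i, (((Fin.snoc z t : Fin (k+1) → Fin p) i : Fin p) : ℤ))
        = (∑ i, ((z i : ℤ))) + (t : ℤ) := by
    intro z t
    rw [show (fun i => (((Fin.snoc z t : Fin (k+1) → Fin p) i : Fin p) : ℤ))
        = Fin.snoc (fun i => ((z i : ℤ))) ((t : ℤ)) from hcomp z t]
    simp [Fin.sum_univ_castSucc, Fin.snoc_castSucc, Fin.snoc_last]
  refine Finset.sum_nbij' (fun y => Fin.init y) (fun z => Fin.snoc z (tz z))
    (fun y _ => Finset.mem_univ _) ?_ ?_ ?_ ?_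
  · intro z _
    rw [Finset.mem_filter]
    refine ⟨Finset.mem_univ _, ?_⟩
    rw [hsum z (tz z), add_comm]
    exact hdv z
  · intro y hy
    rw [Finset.mem_filter] at hy
    have hlast : tz (Fin.init y) = y (Fin.last k) := by
      apply fin_eq_of_dvd p hp.pos
      have h1 : (p : ℤ) ∣ ((tz (Fin.init y) : Fin p) : ℤ) + ∑ i, ((Fin.init y i : ℤ)) :=
        hdv (Fin.init y)
      have h2 : (p : ℤ) ∣ (∑ i, ((Fin.init y i : ℤ))) + ((y (Fin.last k) : Fin p) : ℤ) := by
        have h3 : (∑ i : Fin (k+1), ((y i : ℤ)))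
            = (∑ i, ((Fin.init y i : ℤ))) + ((y (Fin.last k) : Fin p) : ℤ) := by
          rw [Fin.sum_univ_castSucc]
          rfl
        rw [← h3]
        exact hy.2
      have h5 := Int.dvd_sub h1 h2
      have h6 : ((tz (Fin.init y) : Fin p) : ℤ) + (∑ i, ((Fin.init y i : ℤ)))
          - ((∑ i, ((Fin.init y i : ℤ))) + ((y (Fin.last k) : Fin p) : ℤ))
          = ((tz (Fin.init y) : Fin p) : ℤ) - ((y (Fin.last k) : Fin p) : ℤ) := by ring
      rw [h6] at h5
      exact h5
    show Fin.snoc (Fin.init y) (tz (Fin.init y)) = y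
    rw [hlast, Fin.snoc_init_self]
  · intro z _
    exact Fin.init_snoc _ _
  · intro y hy
    rw [Finset.mem_filter] at hy
    apply ep_congr p a hp.ne_zero
    have hy2 : (fun i => ((y i : ℤ)))
        = (fun i => (((Fin.snoc (Fin.init y) (y (Fin.last k)) : Fin (k+1) → Fin p) i : Fin p) : ℤ)) := by
      rw [Fin.snoc_init_self]
    rw [hy2, hcomp (Fin.init y) (y (Fin.last k)), theta_snoc]
    set S := ∑ i, ((Fin.init y i : ℤ)) with hS
    set t := ((y (Fin.last k) : Fin p) : ℤ) with ht
    have h1 : (p : ℤ) ∣ t + S := by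
      have h3 : (∑ i : Fin (k+1), ((y i : ℤ))) = S + t := by
        rw [hS, ht, Fin.sum_univ_castSucc]
        rfl
      have := hy.2
      rw [h3, add_comm] at this
      exact this
    have h4 : thetaInt k (fun i => ((Fin.init y i : ℤ))) + t ^ 2 + t * S
        - thetaInt k (fun i => (((fun y : Fin (k+1) → Fin p => Fin.init y) y) i : ℤ))
        = t * (t + S) := by
      show thetaInt k (fun i => ((Fin.init y i : ℤ))) + t ^ 2 + t * S
        - thetaInt k (fun i => ((Fin.init y i : ℤ))) = t * (t + S)
      ring
    rw [h4]
    exact Dvd.dvd.mul_left h1 t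


set_option maxHeartbeats 1000000 in
theorem stmt6 (p : ℕ) (hp : p.Prime) (hodd : p ≠ 2) (a : ℕ) (ha : Nat.Coprime a p)
    (N : ℕ) (hN : 0 < N) :
    (∑ x : Fin N → Fin p,
        Complex.exp (2 * Real.pi * Complex.I * a *
          (thetaInt N (fun i => (x i : ℤ)) - (x ⟨N - 1, by omega⟩ : ℤ) ^ 2) / p)) =
      if N ≤ 2 then (p : ℂ) else (p : ℂ) * GaussG (N - 2) (a : ℤ) p := by
  obtain ⟨n, rfl⟩ : ∃ n, N = n + 1 := ⟨N - 1, by omega⟩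
  have hcomp : ∀ (z : Fin n → Fin p) (t : Fin p),
      (fun i => (((Fin.snoc z t : Fin (n+1) → Fin p) i : Fin p) : ℤ))
        = Fin.snoc (fun i => ((z i : ℤ))) ((t : ℤ)) :=
    fun z t => Fin.comp_snoc (fun v : Fin p => (v : ℤ)) z t
  have hlast : (⟨n + 1 - 1, by omega⟩ : Fin (n+1)) = Fin.last n := rfl
  -- Step A : snoc decomposition
  have hbij : Function.Bijective
      (fun q : (Fin n → Fin p) × Fin p => (Fin.snoc q.1 q.2 : Fin (n+1) → Fin p)) := by
    constructor
    · intro q q' h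
      have h1 := congrFun h
      refine Prod.ext ?_ ?_
      · funext i
        have := h1 (Fin.castSucc i)
        simpa [Fin.snoc_castSucc] using this
      · have := h1 (Fin.last n)
        simpa [Fin.snoc_last] using this
    · intro x
      exact ⟨(Fin.init x, x (Fin.last n)), Fin.snoc_init_self x⟩
  have hpt : ∀ x : Fin (n+1) → Fin p,
      Complex.exp (2 * Real.pi * Complex.I * a *
          (thetaInt (n+1) (fun i => (x i : ℤ)) - (x ⟨n + 1 - 1, by omega⟩ : ℤ) ^ 2) / p)
        = ep p a (thetaInt (n+1) (fun i => ((x i : ℤ))) - ((x (Fin.last n) : Fin p) : ℤ) ^ 2) := by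
    intro x
    have hx : x ⟨n + 1 - 1, by omega⟩ = x (Fin.last n) := rfl
    rw [hx, ep]
    congr 1
    push_cast
    ring
  rw [Finset.sum_congr rfl fun x _ => hpt x]
  have stepA :
      (∑ x : Fin (n+1) → Fin p,
        ep p a (thetaInt (n+1) (fun i => ((x i : ℤ))) - ((x (Fin.last n) : Fin p) : ℤ) ^ 2))
      = ∑ y : Fin n → Fin p,
          ep p a (thetaInt n (fun i => (y i : ℤ)))
            * (if (p : ℤ) ∣ ∑ i, ((y i : ℤ)) then (p : ℂ) else 0) := by
    rw [← Fintype.sum_bijective _ hbij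
      (fun q : (Fin n → Fin p) × Fin p =>
        ep p a (thetaInt (n+1) (fun i => (((Fin.snoc q.1 q.2 : Fin (n+1) → Fin p) i : Fin p) : ℤ))
          - (((Fin.snoc q.1 q.2 : Fin (n+1) → Fin p) (Fin.last n) : Fin p) : ℤ) ^ 2))
      (fun x : Fin (n+1) → Fin p =>
        ep p a (thetaInt (n+1) (fun i => ((x i : ℤ))) - ((x (Fin.last n) : Fin p) : ℤ) ^ 2))
      (fun q => rfl)]
    rw [Fintype.sum_prod_type]
    refine Finset.sum_congr rfl fun y _ => ?_
    rw [← sum_ep p hp a ha (∑ i, ((y i : ℤ))), Finset.mul_sum]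
    refine Finset.sum_congr rfl fun t _ => ?_
    rw [← ep_add]
    congr 1
    rw [hcomp y t, theta_snoc]
    rw [show ((Fin.snoc y t : Fin (n+1) → Fin p) (Fin.last n)) = t from Fin.snoc_last _ _]
    ring
  rw [stepA]
  have stepB : (∑ y : Fin n → Fin p,
          ep p a (thetaInt n (fun i => (y i : ℤ)))
            * (if (p : ℤ) ∣ ∑ i, ((y i : ℤ)) then (p : ℂ) else 0))
      = (∑ y ∈ Finset.univ.filter
            (fun y : Fin n → Fin p => (p : ℤ) ∣ ∑ i, ((y i : ℤ))),
          ep p a (thetaInt n (fun i => (y i : ℤ)))) * p := by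
    rw [Finset.sum_mul, Finset.sum_filter]
    refine Finset.sum_congr rfl fun y _ => ?_
    split <;> simp
  rw [stepB]
  match n with
  | 0 =>
      simp only [show (0:ℕ) + 1 ≤ 2 by omega, if_true]
      have h1 : ∀ y : Fin 0 → Fin p, thetaInt 0 (fun i => ((y i : ℤ))) = 0 := by
        intro y; simp [thetaInt]
      have h2 : (Finset.univ.filter
            (fun y : Fin 0 → Fin p => (p : ℤ) ∣ ∑ i, ((y i : ℤ)))) = Finset.univ := by
        refine Finset.filter_true_of_mem fun y _ => ?_
        simp
      rw [h2]
      rw [Finset.sum_congr rfl fun y _ => by rw [h1 y, ep_zero]]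
      simp
  | 1 =>
      simp only [show (1:ℕ) + 1 ≤ 2 by omega, if_true]
      haveI : NeZero p := ⟨hp.ne_zero⟩
      have h2 : (Finset.univ.filter
            (fun y : Fin 1 → Fin p => (p : ℤ) ∣ ∑ i, ((y i : ℤ))))
          = {fun _ => (0 : Fin p)} := by
        ext y
        simp only [Finset.mem_filter, Finset.mem_univ, true_and, Finset.mem_singleton,
          Fin.sum_univ_one]
        constructor
        · intro hd
          funext i
          have hi : i = 0 := Subsingleton.elim _ _
          rw [hi]
          exact fin_eq_of_dvd p hp.pos (y 0) 0 (by simpa using hd)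
        · intro h
          rw [h]
          simp
      rw [h2]
      rw [Finset.sum_singleton]
      have h3 : thetaInt 1 (fun i => (((fun _ => (0:Fin p)) i : Fin p) : ℤ)) = 0 := by
        simp [thetaInt]
      rw [h3, ep_zero, one_mul]
  | (k+2) =>
      simp only [show ¬(k + 2 + 1 ≤ 2) by omega, if_false]
      rw [filter_sum p hp a (k+1)]
      have hG : GaussG (k + 2 + 1 - 2) ((a : ℕ) : ℤ) p
          = ∑ z : Fin (k+1) → Fin p, ep p a (thetaInt (k+1) (fun i => ((z i : ℤ)))) := by
        show GaussG (k+1) ((a : ℕ) : ℤ) p = _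
        unfold GaussG ep
        refine Finset.sum_congr rfl fun z _ => ?_
        norm_cast
      rw [hG, mul_comm]
end

section
/- Let p be an odd prime and let C_p(R) = (4(1−R))^{-1} on (ℤ/pℤ)∖{1}. Then: (i) C_p((p+1)/2) = (p+1)/2, i.e. (p+1)/2 mod p is a fixed point of C_p; (ii) for every 0 ≤ t ≤ p−2 the t-th iterate C_p^t(0) is defined (i.e. C_p^j(0) ≢ 1 mod p for all 0 ≤ j < p−2) and C_p^t(0) = t·(2t+2)^{-1} in ℤ/pℤ; in particular C_p^{p−2}(0) = 1 mod p, and the orbit {C_p^t(0) : t = 0, 1, …, p−2} equals (ℤ/pℤ) ∖ {(p+1)/2 mod p}. -/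
open Complex Finset Filter
open scoped Classical

/-- The map `C_p(R) = (4(1−R))⁻¹` on `ℤ/pℤ`. -/
def CFun (p : ℕ) (R : ZMod p) : ZMod p := (4 * (1 - R))⁻¹

theorem stmt8 (p : ℕ) (hp : p.Prime) (hodd : p ≠ 2) :
    (CFun p (((p + 1) / 2 : ℕ) : ZMod p) = (((p + 1) / 2 : ℕ) : ZMod p)) ∧
    (∀ j < p - 2, (CFun p)^[j] 0 ≠ 1) ∧
    (∀ t ≤ p - 2, (CFun p)^[t] 0 = (t : ZMod p) * ((2 * t + 2 : ℕ) : ZMod p)⁻¹) ∧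
    ((CFun p)^[p - 2] 0 = 1) ∧
    ({x : ZMod p | ∃ t ≤ p - 2, (CFun p)^[t] 0 = x} =
      {x : ZMod p | x ≠ (((p + 1) / 2 : ℕ) : ZMod p)}) := by
  haveI : Fact p.Prime := ⟨hp⟩
  have hp3 : 3 ≤ p := by
    have := hp.two_le
    omega
  have hnz : ∀ m : ℕ, 0 < m → m < p → (m : ZMod p) ≠ 0 := by
    intro m hm hmp h
    rw [ZMod.natCast_eq_zero_iff] at h
    have := Nat.le_of_dvd hm h
    omega
  have h2 : (2 : ZMod p) ≠ 0 := by
    have := hnz 2 (by norm_num) (by omega)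
    simpa using this
  have hden : ∀ t : ℕ, t + 1 < p → ((2 * t + 2 : ℕ) : ZMod p) ≠ 0 := by
    intro t ht
    have : ((2 * t + 2 : ℕ) : ZMod p) = 2 * ((t + 1 : ℕ) : ZMod p) := by push_cast; ring
    rw [this]
    exact mul_ne_zero h2 (hnz _ (by omega) ht)
  have hhalf : (((p + 1) / 2 : ℕ) : ZMod p) = (2 : ZMod p)⁻¹ := by
    have hdvd : 2 ∣ p + 1 := by
      have : ¬ 2 ∣ p := by
        intro h; exact hodd ((Nat.prime_dvd_prime_iff_eq Nat.prime_two hp).mp h).symm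
      omega
    have hmul : ((p + 1) / 2 : ℕ) * 2 = p + 1 := Nat.div_mul_cancel hdvd
    have h1 : (((p + 1) / 2 : ℕ) : ZMod p) * 2 = 1 := by
      have := congrArg (fun n : ℕ => (n : ZMod p)) hmul
      push_cast at this
      rw [ZMod.natCast_self] at this
      · simpa using this
    exact eq_inv_of_mul_eq_one_left (by linear_combination h1)
  have key : ∀ t, t ≤ p - 2 →
      (CFun p)^[t] 0 = (t : ZMod p) * ((2 * t + 2 : ℕ) : ZMod p)⁻¹ := by
    intro t
    induction t with
    | zero => intro _; simp
    | succ t ih =>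
      intro ht
      have hd : ((2 * t + 2 : ℕ) : ZMod p) ≠ 0 := hden t (by omega)
      have hd' : ((2 * (t + 1) + 2 : ℕ) : ZMod p) ≠ 0 := hden (t + 1) (by omega)
      rw [Function.iterate_succ_apply', ih (by omega)]
      unfold CFun
      push_cast at hd hd' ⊢
      apply inv_eq_of_mul_eq_one_left
      have ha : (t : ZMod p) + 1 ≠ 0 := by intro h; apply hd; linear_combination 2 * h
      have hb : 2 + (t : ZMod p) ≠ 0 := by intro h; apply hd'; linear_combination 2 * h
      field_simp
      linear_combination (4 : ZMod p) * mul_inv_cancel₀ hb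
  refine ⟨?_, ?_, key, ?_, ?_⟩
  · rw [hhalf]
    unfold CFun
    have e : (4 : ZMod p) * (1 - (2 : ZMod p)⁻¹) = 2 := by
      field_simp
      ring
    rw [e]
  · intro j hj h
    rw [key j (by omega)] at h
    have hd := hden j (by omega)
    have hj2 : ((j + 2 : ℕ) : ZMod p) ≠ 0 := hnz _ (by omega) (by omega)
    apply hj2
    push_cast at hd h ⊢
    have ha : (j : ZMod p) + 1 ≠ 0 := by intro h; apply hd; linear_combination 2 * h
    field_simp at h
    linear_combination -h
  · rw [key (p - 2) le_rfl]
    have e1 : ((p - 2 : ℕ) : ZMod p) = -2 := by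
      rw [Nat.cast_sub (by omega : 2 ≤ p), ZMod.natCast_self]
      push_cast
      ring
    have e2 : ((2 * (p - 2) + 2 : ℕ) : ZMod p) = -2 := by
      have h22 : (2 * (p - 2) + 2 : ℕ) = 2 * p - 2 := by omega
      rw [h22, Nat.cast_sub (by omega : 2 ≤ 2 * p)]
      push_cast [ZMod.natCast_self]
      ring
    rw [e1, e2]
    exact mul_inv_cancel₀ (neg_ne_zero.mpr h2)
  · ext x
    simp only [Set.mem_setOf_eq]
    constructor
    · rintro ⟨t, ht, rfl⟩ hx
      rw [key t ht, hhalf] at hx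
      have hd := hden t (by omega)
      apply h2
      push_cast at hd hx
      have ha : (t : ZMod p) + 1 ≠ 0 := by intro h; apply hd; linear_combination 2 * h
      field_simp at hx
      linear_combination -2 * hx
    · intro hx
      have h1x : (1 - 2 * x) ≠ 0 := by
        intro h
        apply hx
        rw [hhalf]
        exact eq_inv_of_mul_eq_one_right (by linear_combination -h)
      set y : ZMod p := 2 * x * (1 - 2 * x)⁻¹ with hy
      have hvy : ((y.val : ℕ) : ZMod p) = y := by
        rw [ZMod.natCast_val, ZMod.cast_id]
      have hne : y.val ≠ p - 1 := by
        intro h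
        have hv : ((y.val : ℕ) : ZMod p) = ((p - 1 : ℕ) : ZMod p) := by rw [h]
        rw [hvy, Nat.cast_sub (by omega : 1 ≤ p), ZMod.natCast_self] at hv
        rw [hy] at hv
        field_simp at hv
        exact one_ne_zero (by linear_combination hv : (1 : ZMod p) = 0)
      have hle : y.val ≤ p - 2 := by
        have := ZMod.val_lt y
        omega
      refine ⟨y.val, hle, ?_⟩
      rw [key _ hle, hvy]
      have hden' : ((2 * y.val + 2 : ℕ) : ZMod p) = 2 * y + 2 := by
        push_cast [ZMod.natCast_val, ZMod.cast_id]
        ring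
      rw [hden']
      have e2y : 2 * y + 2 = 2 * (1 - 2 * x)⁻¹ := by
        rw [hy]
        field_simp
        ring
      rw [e2y, hy]
      field_simp
end

section
/- Let N be an odd squarefree positive integer and let d be a divisor of N. Then Π_{p | d, p prime} i^{(N−Np)/2} · ((d/p) / p) = i^{(N−Nd)/2}, where the product is over the prime divisors p of d, ((d/p)/p) denotes the Legendre symbol of the integer d/p modulo p, and the powers of i have the integer exponents (N−Np)/2 and (N−Nd)/2 respectively. -/
open Complex Finset Filter
open scoped Classical

lemma jacobi_prod_right (a : ℤ) (s : Finset ℕ) (h : ∀ n ∈ s, n ≠ 0) :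
    (jacobiSym a (∏ n ∈ s, n)) = ∏ n ∈ s, jacobiSym a n := by
  classical
  induction s using Finset.induction with
  | empty => simp [jacobiSym.one_right]
  | @insert x s' hx ih =>
    rw [Finset.prod_insert hx, Finset.prod_insert hx,
      jacobiSym.mul_right' a (h x (Finset.mem_insert_self x s'))
        (Finset.prod_ne_zero_iff.mpr fun n hn => h n (Finset.mem_insert_of_mem hn)),
      ih (fun n hn => h n (Finset.mem_insert_of_mem hn))]

lemma Ipow_key (N a b : ℕ) (hN : Odd N) :
    Complex.I ^ ((((N:ℤ)) - N*(2*a+1))/2) * Complex.I ^ ((((N:ℤ)) - N*(2*b+1))/2)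
      * ((-1:ℂ)) ^ (b * a)
      = Complex.I ^ ((((N:ℤ)) - N*((2*a+1)*(2*b+1)))/2) := by
  have e1 : ((N:ℤ) - N*(2*a+1)) = (-(N*a))*2 := by ring
  have e2 : ((N:ℤ) - N*(2*b+1)) = (-(N*b))*2 := by ring
  have e3 : ((N:ℤ) - N*((2*a+1)*(2*b+1))) = (-(N*a) + -(N*b) + 2*(-(N*(a*b))))*2 := by ring
  rw [e1, e2, e3, Int.mul_ediv_cancel _ two_ne_zero, Int.mul_ediv_cancel _ two_ne_zero,
    Int.mul_ediv_cancel _ two_ne_zero]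
  rw [zpow_add₀ I_ne_zero, zpow_add₀ I_ne_zero]
  have h2 : Complex.I ^ ((2:ℤ)*(-(N*(a*b):ℤ))) = ((-1:ℂ))^(b*a) := by
    rw [zpow_mul, show (Complex.I ^ (2:ℤ)) = -1 by rw [zpow_two, Complex.I_mul_I],
      show (-((N:ℤ)*(a*b))) = (-(N:ℤ))*((a*b:ℕ):ℤ) by push_cast; ring,
      zpow_mul, zpow_neg, (Int.odd_coe_nat N |>.mpr hN).neg_one_zpow,
      show ((a*b:ℕ):ℤ) = ((b*a:ℕ):ℤ) by push_cast; ring, zpow_natCast, inv_neg_one]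
  rw [h2]

theorem stmt12 (N : ℕ) (hodd : Odd N) (hsf : Squarefree N) (d : ℕ) (hd : d ∣ N) :
    (∏ p ∈ d.primeFactors,
        Complex.I ^ (((N : ℤ) - (N : ℤ) * p) / 2) * (jacobiSym ((d / p : ℕ) : ℤ) p : ℂ)) =
      Complex.I ^ (((N : ℤ) - (N : ℤ) * d) / 2) := by
  induction d using Nat.strong_induction_on with
  | _ d IH =>
  rcases eq_or_ne d 1 with rfl | h1
  · simp
  have hd0 : d ≠ 0 := by
    rintro rfl
    exact hsf.ne_zero (Nat.eq_zero_of_zero_dvd hd)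
  set p := d.minFac with hp_def
  have hp : p.Prime := Nat.minFac_prime h1
  have hpd : p ∣ d := Nat.minFac_dvd d
  set d' := d / p with hd'_def
  have hdd : d = p * d' := (Nat.mul_div_cancel' hpd).symm
  have hd'0 : d' ≠ 0 := by
    intro h
    exact hd0 (by rw [hdd, h, mul_zero])
  have hd'N : d' ∣ N := dvd_trans (hdd ▸ dvd_mul_left d' p) hd
  have hsfd : Squarefree d := hsf.squarefree_of_dvd hd
  have hpd' : ¬ p ∣ d' := by
    intro h
    exact hp.not_isUnit (hsfd p (by rw [hdd]; exact mul_dvd_mul (dvd_refl p) h))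
  have hcop : Nat.Coprime p d' := (Nat.Prime.coprime_iff_not_dvd hp).mpr hpd'
  have hdodd : Odd d := by
    rcases Nat.even_or_odd d with he | ho
    · have : (2:ℕ) ∣ N := dvd_trans (even_iff_two_dvd.mp he) hd
      exact absurd hodd (by simpa [Nat.odd_iff, Nat.even_iff] using even_iff_two_dvd.mpr this)
    · exact ho
  have hpodd : Odd p := hp.odd_of_ne_two (by
    intro h2
    exact absurd hdodd (by simp [hdd, h2, Nat.even_mul, Nat.not_odd_iff_even]))
  have hd'odd : Odd d' := by
    rcases Nat.even_or_odd d' with he | ho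
    · exact absurd hdodd (by simp [hdd, Nat.even_mul, Nat.not_odd_iff_even, he])
    · exact ho
  have hd'lt : d' < d := by
    rw [hdd]
    exact (Nat.lt_mul_iff_one_lt_left (Nat.pos_of_ne_zero hd'0)).mpr hp.one_lt
  have hIH := IH d' hd'lt hd'N
  have hpnotmem : p ∉ d'.primeFactors := fun h => hpd' (Nat.dvd_of_mem_primeFactors h)
  have hpf : d.primeFactors = insert p d'.primeFactors := by
    rw [hdd, Nat.primeFactors_mul hp.pos.ne' hd'0, hp.primeFactors,
      ← Finset.insert_eq]
  rw [hpf, Finset.prod_insert hpnotmem]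
  have hquot : d / p = d' := rfl
  have hprod : (∏ q ∈ d'.primeFactors,
      (Complex.I ^ (((N:ℤ) - (N:ℤ)*q)/2) * ((jacobiSym ((d / q : ℕ) : ℤ) q : ℤ) : ℂ)))
      = ((jacobiSym (p:ℤ) d' : ℤ) : ℂ) * Complex.I ^ (((N:ℤ) - (N:ℤ)*d')/2) := by
    have step : ∀ q ∈ d'.primeFactors,
        (Complex.I ^ (((N:ℤ) - (N:ℤ)*q)/2) * ((jacobiSym ((d / q : ℕ) : ℤ) q : ℤ) : ℂ))
        = ((jacobiSym (p:ℤ) q : ℤ) : ℂ) *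
          (Complex.I ^ (((N:ℤ) - (N:ℤ)*q)/2) * ((jacobiSym ((d' / q : ℕ) : ℤ) q : ℤ) : ℂ)) := by
      intro q hq
      have hqd' : q ∣ d' := Nat.dvd_of_mem_primeFactors hq
      have hdq : d / q = p * (d' / q) := by rw [hdd, Nat.mul_div_assoc p hqd']
      rw [hdq]
      push_cast
      rw [jacobiSym.mul_left]
      push_cast
      ring
    rw [Finset.prod_congr rfl step, Finset.prod_mul_distrib, hIH]
    congr 1
    rw [← Int.cast_prod, ← jacobi_prod_right (p:ℤ) d'.primeFactors
      (fun n hn => (Nat.prime_of_mem_primeFactors hn).pos.ne'),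
      Nat.prod_primeFactors_of_squarefree (hsfd.squarefree_of_dvd (hdd ▸ dvd_mul_left d' p))]
  rw [hprod, hquot]
  -- quadratic reciprocity step
  have hgcd : Int.gcd (p:ℤ) (d':ℤ) = 1 := by
    simpa [Int.gcd_natCast_natCast] using hcop
  have hrec : (jacobiSym (d':ℤ) p) * (jacobiSym (p:ℤ) d') = (-1)^(d'/2 * (p/2)) := by
    rw [jacobiSym.quadratic_reciprocity hd'odd hpodd, mul_assoc, ← sq,
      jacobiSym.sq_one hgcd, mul_one]
  obtain ⟨a, ha⟩ := hpodd
  obtain ⟨b, hb⟩ := hd'odd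
  have hpa : p / 2 = a := by omega
  have hd'b : d' / 2 = b := by omega
  have key := Ipow_key N a b hodd
  have hfin : Complex.I ^ (((N:ℤ) - (N:ℤ)*p)/2) * ((jacobiSym (d':ℤ) p : ℤ) : ℂ) *
      (((jacobiSym (p:ℤ) d' : ℤ) : ℂ) * Complex.I ^ (((N:ℤ) - (N:ℤ)*d')/2))
      = Complex.I ^ (((N:ℤ) - (N:ℤ)*d)/2) := by
    have : ((jacobiSym (d':ℤ) p : ℤ) : ℂ) * ((jacobiSym (p:ℤ) d' : ℤ) : ℂ)
        = ((-1:ℂ))^(b*a) := by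
      rw [← Int.cast_mul, hrec, hpa, hd'b]
      push_cast
      ring
    calc Complex.I ^ (((N:ℤ) - (N:ℤ)*p)/2) * ((jacobiSym (d':ℤ) p : ℤ) : ℂ) *
        (((jacobiSym (p:ℤ) d' : ℤ) : ℂ) * Complex.I ^ (((N:ℤ) - (N:ℤ)*d')/2))
        = Complex.I ^ (((N:ℤ) - (N:ℤ)*p)/2) * Complex.I ^ (((N:ℤ) - (N:ℤ)*d')/2) *
            (((jacobiSym (d':ℤ) p : ℤ) : ℂ) * ((jacobiSym (p:ℤ) d' : ℤ) : ℂ)) := by ring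
      _ = Complex.I ^ (((N:ℤ) - (N:ℤ)*p)/2) * Complex.I ^ (((N:ℤ) - (N:ℤ)*d')/2) *
            ((-1:ℂ))^(b*a) := by rw [this]
      _ = Complex.I ^ (((N:ℤ) - (N:ℤ)*d)/2) := by
            rw [mul_assoc] at key ⊢
            rw [show ((p:ℤ)) = 2*(a:ℤ)+1 by exact_mod_cast congrArg (Nat.cast (R := ℤ)) ha,
              show ((d':ℤ)) = 2*(b:ℤ)+1 by exact_mod_cast congrArg (Nat.cast (R := ℤ)) hb,
              show ((d:ℤ)) = (2*(a:ℤ)+1)*(2*(b:ℤ)+1) by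
                rw [hdd]; push_cast [ha, hb]; ring]
            convert key using 3
  exact hfin
end

section
/- Let p be an odd prime and let C_p(R) = (4(1−R))^{-1} on (ℤ/pℤ)∖{1}. Then Π_{t=1}^{p−2} ((1 − C_p^{t−1}(0)) / p) = (−1)^{(p−1)/2} · ((p+1)/2 / p), where ((1 − C_p^{t−1}(0))/p) denotes the Legendre symbol of a representative of 1 − C_p^{t−1}(0) ∈ ℤ/pℤ, and ((p+1)/2 / p) is the Legendre symbol of (p+1)/2 modulo p. -/
open Complex Finset Filter
open scoped Classical

lemma natCast_ne_zero_of_lt {p n : ℕ} (hp : p.Prime) (h0 : 0 < n) (h1 : n < p) :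
    (n : ZMod p) ≠ 0 := by
  haveI : Fact p.Prime := ⟨hp⟩
  rw [Ne, ZMod.natCast_eq_zero_iff]
  exact fun hd => absurd (Nat.le_of_dvd h0 hd) (not_le.mpr h1)

lemma CFun_iterate {p : ℕ} (hp : p.Prime) (hodd : p ≠ 2) :
    ∀ t : ℕ, t ≤ p - 2 → (CFun p)^[t] 0 = (t : ZMod p) * (2 * (t : ZMod p) + 2)⁻¹ := by
  haveI : Fact p.Prime := ⟨hp⟩
  have hp3 : 3 ≤ p := by have := hp.two_le; omega
  have h2 : (2 : ZMod p) ≠ 0 := by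
    have := natCast_ne_zero_of_lt hp (show 0 < 2 by norm_num) (by omega)
    exact_mod_cast this
  intro t
  induction t with
  | zero => simp
  | succ t ih =>
    intro ht
    have ht' : t ≤ p - 2 := by omega
    have htp : (t : ZMod p) + 1 ≠ 0 := by
      have := natCast_ne_zero_of_lt hp (Nat.succ_pos t) (show t + 1 < p by omega)
      push_cast at this; exact this
    have ht2 : (t : ZMod p) + 2 ≠ 0 := by
      have := natCast_ne_zero_of_lt hp (show 0 < t + 2 by omega) (show t + 2 < p by omega)
      push_cast at this; exact this
    have hden : 2 * (t : ZMod p) + 2 ≠ 0 := by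
      have h' : (2 : ZMod p) * ((t : ZMod p) + 1) ≠ 0 := mul_ne_zero h2 htp
      convert h' using 1; ring
    rw [Function.iterate_succ_apply', ih ht']
    simp only [CFun]
    have key : (4 : ZMod p) * (1 - (t : ZMod p) * (2 * (t : ZMod p) + 2)⁻¹)
        = (2 * ((t : ZMod p) + 1) + 2) * ((t : ZMod p) + 1)⁻¹ := by
      field_simp
      ring
    rw [key, mul_inv, inv_inv]
    push_cast
    ring

theorem stmt15 (p : ℕ) (hp : p.Prime) (hodd : p ≠ 2) :
    (∏ t ∈ Finset.Icc 1 (p - 2),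
        jacobiSym (((1 - (CFun p)^[t - 1] 0 : ZMod p).val : ℤ)) p) =
      (-1) ^ ((p - 1) / 2) * jacobiSym (((p + 1) / 2 : ℕ) : ℤ) p := by
  haveI : Fact p.Prime := ⟨hp⟩
  have hp3 : 3 ≤ p := by have := hp.two_le; omega
  have hpodd : p % 2 = 1 := Nat.odd_iff.mp (hp.odd_of_ne_two hodd)
  set χ := quadraticChar (ZMod p) with hχ
  have h2 : (2 : ZMod p) ≠ 0 := by
    have := natCast_ne_zero_of_lt hp (show 0 < 2 by norm_num) (by omega)
    exact_mod_cast this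
  -- each factor
  have hfac : ∀ t ∈ Finset.Icc 1 (p - 2),
      (1 - (CFun p)^[t - 1] 0 : ZMod p) = ((t : ZMod p) + 1) * (2 * (t : ZMod p))⁻¹ := by
    intro t htmem
    rw [Finset.mem_Icc] at htmem
    obtain ⟨s, rfl⟩ : ∃ s, t = s + 1 := ⟨t - 1, by omega⟩
    rw [Nat.add_sub_cancel, CFun_iterate hp hodd s (by omega)]
    have hs1 : ((s : ZMod p) + 1) ≠ 0 := by
      have := natCast_ne_zero_of_lt hp (Nat.succ_pos s) (show s + 1 < p by omega)
      push_cast at this; exact this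
    have hs2 : 2 * (s : ZMod p) + 2 ≠ 0 := by
      have h' : (2 : ZMod p) * ((s : ZMod p) + 1) ≠ 0 := mul_ne_zero h2 hs1
      convert h' using 1; ring
    push_cast
    have hs3 : 2 * ((s : ZMod p) + 1) ≠ 0 := mul_ne_zero h2 hs1
    field_simp
    ring
  have hL : ∀ t ∈ Finset.Icc 1 (p - 2),
      jacobiSym (((1 - (CFun p)^[t - 1] 0 : ZMod p).val : ℤ)) p
        = χ (1 - (CFun p)^[t - 1] 0) := by
    intro t _
    rw [← jacobiSym.legendreSym.to_jacobiSym]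
    simp [legendreSym, hχ, ZMod.natCast_val, ZMod.cast_id]
  rw [Finset.prod_congr rfl hL, ← map_prod χ _ _]
  -- compute the product
  have f1 : ∀ n : ℕ, (∏ t ∈ Finset.Icc 1 n, (t + 1)) = Nat.factorial (n + 1) := by
    intro n
    induction n with
    | zero => simp
    | succ n ih =>
      rw [Finset.prod_Icc_succ_top (by omega), ih, Nat.factorial_succ (n + 1)]
      ring
  have f2 : ∀ n : ℕ, (∏ t ∈ Finset.Icc 1 n, (2 * t)) = 2 ^ n * Nat.factorial n := by
    intro n
    induction n with
    | zero => simp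
    | succ n ih =>
      rw [Finset.prod_Icc_succ_top (by omega), ih, Nat.factorial_succ]
      ring
  have hpm1 : ((p - 1 : ℕ) : ZMod p) = -1 := by
    have : ((p - 1 : ℕ) : ZMod p) = (p : ZMod p) - 1 := by
      rw [Nat.cast_sub (by omega)]; simp
    rw [this, ZMod.natCast_self]; ring
  have hwil : ((Nat.factorial (p - 1) : ℕ) : ZMod p) = -1 := ZMod.wilsons_lemma p
  have hpm2 : ((Nat.factorial (p - 2) : ℕ) : ZMod p) = 1 := by
    have hfs : Nat.factorial (p - 1) = (p - 1) * Nat.factorial (p - 2) := by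
      rw [show p - 1 = (p - 2) + 1 by omega, Nat.factorial_succ]
    rw [hfs] at hwil
    push_cast at hwil
    rw [hpm1] at hwil
    rw [neg_one_mul] at hwil
    exact neg_injective hwil
  have hfer : (2 : ZMod p) ^ (p - 2) = (2 : ZMod p)⁻¹ := by
    have h1 : (2 : ZMod p) ^ (p - 1) = 1 := ZMod.pow_card_sub_one_eq_one h2
    have h2' : (2 : ZMod p) ^ (p - 2) * 2 = 1 := by
      rw [← pow_succ, show p - 2 + 1 = p - 1 by omega]; exact h1
    exact eq_inv_of_mul_eq_one_left h2'
  have hprod : (∏ t ∈ Finset.Icc 1 (p - 2), (1 - (CFun p)^[t - 1] 0 : ZMod p)) = -2 := by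
    rw [Finset.prod_congr rfl hfac, Finset.prod_mul_distrib]
    have hA : (∏ t ∈ Finset.Icc 1 (p - 2), ((t : ZMod p) + 1)) = -1 := by
      have : (∏ t ∈ Finset.Icc 1 (p - 2), ((t : ZMod p) + 1))
          = (((∏ t ∈ Finset.Icc 1 (p - 2), (t + 1) : ℕ) : ZMod p)) := by
        push_cast; rfl
      rw [this, f1, show p - 2 + 1 = p - 1 by omega, hwil]
    have hB : (∏ t ∈ Finset.Icc 1 (p - 2), (2 * (t : ZMod p))) = (2 : ZMod p)⁻¹ := by
      have : (∏ t ∈ Finset.Icc 1 (p - 2), (2 * (t : ZMod p)))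
          = (((∏ t ∈ Finset.Icc 1 (p - 2), (2 * t) : ℕ) : ZMod p)) := by
        push_cast; rfl
      rw [this, f2]
      push_cast
      rw [hfer, hpm2, mul_one]
    rw [Finset.prod_inv_distrib, hB, hA, inv_inv]
    ring
  rw [hprod]
  -- now χ (-2) = χ (-1) * χ 2
  have hsplit : χ (-2 : ZMod p) = χ (-1) * χ 2 := by
    rw [← map_mul]; norm_num
  have hneg1 : χ (-1 : ZMod p) = (-1) ^ ((p - 1) / 2) := by
    have hchar : ringChar (ZMod p) ≠ 2 := by
      rw [ZMod.ringChar_zmod_n]; exact hodd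
    rw [hχ, quadraticChar_neg_one hchar, ZMod.card p, ZMod.χ₄_eq_neg_one_pow hpodd,
      show p / 2 = (p - 1) / 2 by omega]
  -- RHS
  have hinv2 : (((p + 1) / 2 : ℕ) : ZMod p) = (2 : ZMod p)⁻¹ := by
    have hmul : ((p + 1) / 2) * 2 = p + 1 := Nat.div_mul_cancel (by omega)
    have : (((p + 1) / 2 : ℕ) : ZMod p) * 2 = 1 := by
      have := congrArg (Nat.cast : ℕ → ZMod p) hmul
      push_cast at this
      rw [ZMod.natCast_self] at this
      simpa using this
    exact eq_inv_of_mul_eq_one_left this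
  have hRHS : jacobiSym (((p + 1) / 2 : ℕ) : ℤ) p = χ ((2 : ZMod p)⁻¹) := by
    rw [← jacobiSym.legendreSym.to_jacobiSym]
    simp only [legendreSym, Int.cast_natCast, hinv2, hχ]
  have hchi2 : χ ((2 : ZMod p)⁻¹) = χ 2 := by
    have e1 : χ (2⁻¹) * χ 2 = 1 := by
      rw [← map_mul, inv_mul_cancel₀ h2, map_one]
    have e2 : χ 2 * χ 2 = 1 := by
      have := quadraticChar_sq_one h2
      rwa [sq] at this
    have hne : χ 2 ≠ 0 := by
      intro h; rw [h, mul_zero] at e2; exact one_ne_zero e2.symm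
    exact mul_right_cancel₀ hne (e1.trans e2.symm)
  rw [hRHS, hchi2, hsplit, hneg1]
end

section
/- Let N be a squarefree positive integer with gcd(N,6) = 1 and let c, d be divisors of N. Define the rational number v(c,d) = (N/(24c)) · ( (d²·gcd(N/d,c)² − gcd(d,c)²) / d ), which is the order of vanishing of the eta quotient η^N((N/d)z)/η(dz) at the cusp 1/c. Then v(c,d) = 0 if c = d, and v(c,d) > 0 if c ≠ d. -/
open Complex Finset Filter
open scoped Classical

theorem stmt16 (N : ℕ) (hsf : Squarefree N) (h6 : Nat.gcd N 6 = 1)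
    (c d : ℕ) (hc : c ∣ N) (hd : d ∣ N) :
    (c = d →
      ((N : ℚ) / (24 * c)) *
        (((d : ℚ) ^ 2 * (Nat.gcd (N / d) c : ℚ) ^ 2 - (Nat.gcd d c : ℚ) ^ 2) / d) = 0) ∧
    (c ≠ d →
      0 < ((N : ℚ) / (24 * c)) *
        (((d : ℚ) ^ 2 * (Nat.gcd (N / d) c : ℚ) ^ 2 - (Nat.gcd d c : ℚ) ^ 2) / d)) := by
  have hN : 0 < N := Nat.pos_of_ne_zero hsf.ne_zero
  have hc0 : 0 < c := Nat.pos_of_dvd_of_pos hc hN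
  have hd0 : 0 < d := Nat.pos_of_dvd_of_pos hd hN
  constructor
  · rintro rfl
    have hg : Nat.gcd (N / c) c = 1 := by
      have h1 : Nat.gcd (N / c) c * Nat.gcd (N / c) c ∣ N := by
        calc Nat.gcd (N / c) c * Nat.gcd (N / c) c
            ∣ (N / c) * c := mul_dvd_mul (Nat.gcd_dvd_left _ _) (Nat.gcd_dvd_right _ _)
          _ = N := Nat.div_mul_cancel hc
      exact Nat.isUnit_iff.mp (hsf _ h1)
    rw [hg, Nat.gcd_self]
    push_cast
    ring
  · intro hne
    have hg2pos : 0 < Nat.gcd (N / d) c := Nat.gcd_pos_of_pos_right _ hc0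
    have key : Nat.gcd d c < d * Nat.gcd (N / d) c := by
      by_cases hdc : d ∣ c
      · obtain ⟨m, hm⟩ := hdc
        obtain ⟨k, hk⟩ := hc
        have hNd : N / d = m * k := by
          rw [hk, hm, mul_assoc, Nat.mul_div_cancel_left _ hd0]
        have hm2 : 2 ≤ m := by
          rcases Nat.lt_or_ge m 2 with h | h
          · interval_cases m
            · simp [hm] at hc0
            · simp [hm] at hne
          · exact h
        have hmg2 : m ∣ Nat.gcd (N / d) c := by
          apply Nat.dvd_gcd
          · rw [hNd]; exact Dvd.intro k rfl
          · rw [hm]; exact ⟨d, mul_comm d m⟩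
        have hg1 : Nat.gcd d c = d := Nat.gcd_eq_left ⟨m, hm⟩
        have : d * m ≤ d * Nat.gcd (N / d) c :=
          Nat.mul_le_mul_left d (Nat.le_of_dvd hg2pos hmg2)
        calc Nat.gcd d c = d := hg1
          _ < d * m := by nlinarith
          _ ≤ d * Nat.gcd (N / d) c := this
      · have h1 : Nat.gcd d c < d := by
          rcases Nat.lt_or_ge (Nat.gcd d c) d with h | h
          · exact h
          · exfalso
            have := Nat.le_antisymm (Nat.le_of_dvd hd0 (Nat.gcd_dvd_left d c)) h
            exact hdc (this ▸ Nat.gcd_dvd_right d c)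
        calc Nat.gcd d c < d := h1
          _ ≤ d * Nat.gcd (N / d) c := Nat.le_mul_of_pos_right d hg2pos
    have key2 : Nat.gcd d c ^ 2 < d ^ 2 * Nat.gcd (N / d) c ^ 2 := by
      calc Nat.gcd d c ^ 2 < (d * Nat.gcd (N / d) c) ^ 2 :=
            Nat.pow_lt_pow_left key (by norm_num)
        _ = d ^ 2 * Nat.gcd (N / d) c ^ 2 := by ring
    have hNq : (0 : ℚ) < N := by exact_mod_cast hN
    have hcq : (0 : ℚ) < c := by exact_mod_cast hc0
    have hdq : (0 : ℚ) < d := by exact_mod_cast hd0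
    have hk2 : ((Nat.gcd d c : ℚ)) ^ 2 < (d : ℚ) ^ 2 * (Nat.gcd (N / d) c : ℚ) ^ 2 := by
      exact_mod_cast key2
    apply mul_pos
    · apply div_pos hNq; linarith
    · apply div_pos; linarith; exact hdq
end

section
/- Let N be a squarefree positive integer with gcd(N,6) = 1, let d be a divisor of N, and let v, w ∈ ℤ with (N/d)·w − d·v = 1. Then (w/d)^N · e( (N·(N/d + w)·d − N·v·w·(d²−1) − 3·N·d + 1 − d·v) / 24 ) = ((N/d)/d) · e( (1 − N·d)/8 ), where e(x) = e^{2πix}, (w/d) and ((N/d)/d) denote Jacobi symbols, and the arguments of e are rational numbers. -/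
open Complex Finset Filter
open scoped Classical

/-- `e(x) = e^{2πix}` for rational `x`. -/
noncomputable def eQ (x : ℚ) : ℂ := Complex.exp (2 * Real.pi * Complex.I * (x : ℂ))

lemma key3' : ∀ n d v w : ZMod 3, n*w - d*v = 1 → n ≠ 0 → d ≠ 0 →
    n*d*(n+w)*d - n*d*v*w*(d^2-1) - d*v - 2 = 0 := by decide
lemma key8' : ∀ n d v w : ZMod 8, n*w - d*v = 1 → n*n = 1 → d*d = 1 →
    n*d*(n+w)*d - n*d*v*w*(d^2-1) - d*v - 2 = 0 := by decide

lemma sq8' (x : ℕ) (h : Odd x) : ((x:ZMod 8)) * x = 1 := by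
  obtain ⟨k, rfl⟩ := h
  obtain ⟨j, hj⟩ := Nat.even_mul_succ_self k
  have : ((2*k+1 : ℕ) : ZMod 8) * ((2*k+1:ℕ):ZMod 8) = 4 * ((k*(k+1):ℕ):ZMod 8) + 1 := by
    push_cast; ring
  rw [this, hj]
  push_cast
  have h8 : ((8:ℕ) : ZMod 8) = 0 := ZMod.natCast_self 8
  push_cast at h8
  linear_combination (j : ZMod 8) * h8

lemma eQ_add_int' (x : ℚ) (k : ℤ) : eQ (x + k) = eQ x := by
  unfold eQ
  push_cast
  rw [mul_add, Complex.exp_add]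
  have : Complex.exp (2*Real.pi*Complex.I*k) = 1 := by
    simpa [mul_comm] using Complex.exp_int_mul_two_pi_mul_I k
  rw [this, mul_one]

theorem stmt17 (N : ℕ) (hsf : Squarefree N) (h6 : Nat.gcd N 6 = 1)
    (d : ℕ) (hd : d ∣ N) (v w : ℤ) (hvw : ((N / d : ℕ) : ℤ) * w - (d : ℤ) * v = 1) :
    ((jacobiSym w d : ℂ)) ^ N *
      eQ (((N : ℚ) * (((N / d : ℕ) : ℚ) + (w : ℚ)) * (d : ℚ) -
            (N : ℚ) * (v : ℚ) * (w : ℚ) * ((d : ℚ) ^ 2 - 1) -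
            3 * (N : ℚ) * (d : ℚ) + 1 - (d : ℚ) * (v : ℚ)) / 24) =
      (jacobiSym ((N / d : ℕ) : ℤ) d : ℂ) * eQ ((1 - (N : ℚ) * (d : ℚ)) / 8) := by
  set n : ℕ := N / d with hn
  have hN0 : N ≠ 0 := hsf.ne_zero
  have hnd : n * d = N := Nat.div_mul_cancel hd
  -- parity facts
  have hcop2 : Nat.Coprime N 2 := Nat.Coprime.coprime_dvd_right (by norm_num) h6
  have hcop3 : Nat.Coprime N 3 := Nat.Coprime.coprime_dvd_right (by norm_num) h6
  have hNodd : Odd N := Nat.Coprime.odd_of_left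
    (by rwa [Nat.coprime_comm] at hcop2 : Nat.Coprime 2 N)
  have hNodd' : Odd (n * d) := hnd ▸ hNodd
  have hnodd : Odd n := (Nat.odd_mul.mp hNodd').1
  have hdodd : Odd d := (Nat.odd_mul.mp hNodd').2
  -- coprimality with 3
  have hn3 : ¬ ((3:ℕ) ∣ n) := by
    intro h3
    have hN3 : (3:ℕ) ∣ N := h3.trans ⟨d, hnd.symm⟩
    have h1 : (3:ℕ) ∣ Nat.gcd N 3 := Nat.dvd_gcd hN3 dvd_rfl
    rw [hcop3] at h1; omega
  have hd3 : ¬ ((3:ℕ) ∣ d) := by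
    intro h3
    have hN3 : (3:ℕ) ∣ N := h3.trans ⟨n, by rw [← hnd, Nat.mul_comm]⟩
    have h1 : (3:ℕ) ∣ Nat.gcd N 3 := Nat.dvd_gcd hN3 dvd_rfl
    rw [hcop3] at h1; omega
  -- the key divisibility
  set B : ℤ := (n:ℤ)*d*((n:ℤ)+w)*d - (n:ℤ)*d*v*w*((d:ℤ)^2-1) - (d:ℤ)*v - 2 with hB
  have h3dvd : (3:ℤ) ∣ B := by
    have : ((B : ℤ) : ZMod 3) = 0 := by
      push_cast [hB]
      exact key3' (n:ZMod 3) (d:ZMod 3) (v:ZMod 3) (w:ZMod 3)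
        (by have := congrArg (fun z : ℤ => (z : ZMod 3)) hvw; push_cast at this ⊢; exact this)
        (by rwa [Ne, ZMod.natCast_eq_zero_iff])
        (by rwa [Ne, ZMod.natCast_eq_zero_iff])
    exact_mod_cast (ZMod.intCast_zmod_eq_zero_iff_dvd B 3).mp this
  have h8dvd : (8:ℤ) ∣ B := by
    have : ((B : ℤ) : ZMod 8) = 0 := by
      push_cast [hB]
      exact key8' (n:ZMod 8) (d:ZMod 8) (v:ZMod 8) (w:ZMod 8)
        (by have := congrArg (fun z : ℤ => (z : ZMod 8)) hvw; push_cast at this ⊢; exact this)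
        (sq8' n hnodd) (sq8' d hdodd)
    exact_mod_cast (ZMod.intCast_zmod_eq_zero_iff_dvd B 8).mp this
  have h24 : (24:ℤ) ∣ B := by
    have hc : IsCoprime (3:ℤ) 8 := by
      rw [Int.isCoprime_iff_gcd_eq_one]; decide
    have := hc.mul_dvd h3dvd h8dvd
    simpa using this
  obtain ⟨k, hk⟩ := h24
  -- Jacobi symbol manipulations
  have hwcop : Int.gcd w d = 1 := by
    have : IsCoprime w (d:ℤ) := ⟨(n:ℤ), -v, by linarith⟩
    exact Int.isCoprime_iff_gcd_eq_one.mp this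
  have hJ := jacobiSym.eq_one_or_neg_one hwcop
  have hprod : jacobiSym ((n:ℤ)*w) d = 1 := by
    have h1 : ((n:ℤ)*w) % d = (1 + (d:ℤ)*v) % d := by rw [show (n:ℤ)*w = 1 + (d:ℤ)*v by linarith]
    have h2 : (1 + (d:ℤ)*v) % d = 1 % d := by
      have := Int.add_mul_emod_self_left (a := 1) (b := (d:ℤ)) (c := v)
      simpa using this
    rw [jacobiSym.mod_left' (h1.trans h2), jacobiSym.one_left]
  have hmul : jacobiSym (n:ℤ) d * jacobiSym w d = 1 := by
    rw [← jacobiSym.mul_left]; exact hprod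
  have hJn : jacobiSym (n:ℤ) d = jacobiSym w d := by
    rcases hJ with h | h <;> rw [h] at hmul ⊢ <;> omega
  have hpow : ((jacobiSym w d : ℂ)) ^ N = (jacobiSym w d : ℂ) := by
    rcases hJ with h | h <;> rw [h]
    · simp
    · push_cast
      exact hNodd.neg_one_pow
  rw [hpow, hJn]
  congr 1
  -- now the eQ equality
  have hNQ : (N:ℚ) = (n:ℚ) * d := by exact_mod_cast hnd.symm
  have hBQ : (n:ℚ)*d*((n:ℚ)+w)*d - (n:ℚ)*d*v*w*((d:ℚ)^2-1) - (d:ℚ)*v - 2 = 24*(k:ℚ) := by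
    exact_mod_cast congrArg (fun z : ℤ => (z : ℚ)) hk
  have harg : ((N : ℚ) * (((n : ℕ) : ℚ) + (w : ℚ)) * (d : ℚ) -
            (N : ℚ) * (v : ℚ) * (w : ℚ) * ((d : ℚ) ^ 2 - 1) -
            3 * (N : ℚ) * (d : ℚ) + 1 - (d : ℚ) * (v : ℚ)) / 24
      = (1 - (N : ℚ) * (d : ℚ)) / 8 + (k:ℤ) := by
    rw [hNQ]
    push_cast
    linear_combination hBQ / 24
  rw [harg, eQ_add_int']
end

section
/- Let r ≥ 1 be an integer and let V_r(n) = Σ_{(x_1,…,x_r) ∈ ℕ₀^r, x_1+⋯+x_r = n} Π_{i=1}^r P(x_i). Then lim_{n→∞} V_r(n)/V_r(n−1) = 1. -/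
set_option maxHeartbeats 1600000

open Complex Finset Filter
open scoped Classical

namespace PartAux

open Multiset

noncomputable def Qfin (t : ℕ) : Finset (Nat.Partition t) :=
  (Finset.univ).filter (fun l => 1 ∉ l.parts)

noncomputable def Qcard (t : ℕ) : ℕ := (Qfin t).card

noncomputable def Epart (r n : ℕ) : ℕ :=
  ∑ p ∈ Finset.HasAntidiagonal.antidiagonal n, Qcard (p.1+1) * Vpart r p.2

lemma Ppos (n : ℕ) : 0 < partitionCount n := by
  have : Nonempty (Nat.Partition n) := ⟨Nat.Partition.ofSums n {n} (by simp)⟩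
  exact Fintype.card_pos

lemma P_zero : partitionCount 0 = 1 := by
  have huniq : ∀ l : Nat.Partition 0, l = Nat.Partition.ofSums 0 {0} (by simp) := by
    intro l
    ext1
    have h0 : l.parts = 0 := by
      by_contra h
      obtain ⟨a, ha⟩ := Multiset.exists_mem_of_ne_zero h
      have hpos := l.parts_pos ha
      have hle := Multiset.single_le_sum (fun x _ => Nat.zero_le x) a ha
      rw [l.parts_sum] at hle
      omega
    rw [h0]
    simp [Nat.Partition.ofSums]
  have hsub : Subsingleton (Nat.Partition 0) :=
    ⟨fun a b => (huniq a).trans (huniq b).symm⟩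
  have h1 := Fintype.card_le_one_iff_subsingleton.mpr hsub
  have h2 := Ppos 0
  simp only [partitionCount] at *
  omega

def addOne (n : ℕ) (l : Nat.Partition n) : Nat.Partition (n+1) where
  parts := 1 ::ₘ l.parts
  parts_pos := by
    intro i hi
    rcases Multiset.mem_cons.mp hi with h | h
    · omega
    · exact l.parts_pos h
  parts_sum := by rw [Multiset.sum_cons, l.parts_sum, Nat.add_comm]

lemma erase_one_sum {n : ℕ} (l : Nat.Partition (n+1)) (h : 1 ∈ l.parts) :
    (l.parts.erase 1).sum = n := by
  have := Multiset.cons_erase h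
  have h2 : l.parts.sum = n + 1 := l.parts_sum
  rw [← this, Multiset.sum_cons] at h2
  omega

lemma P_split (n : ℕ) : partitionCount (n+1) = partitionCount n + Qcard (n+1) := by
  classical
  have hsplit := Finset.card_filter_add_card_filter_not
    (s := (Finset.univ : Finset (Nat.Partition (n+1)))) (p := fun l => 1 ∈ l.parts)
  have hcard : ((Finset.univ : Finset (Nat.Partition (n+1))).filter
      (fun l => 1 ∈ l.parts)).card = partitionCount n := by
    refine Finset.card_bij'
      (fun l hl => Nat.Partition.ofSums n (l.parts.erase 1)
        (erase_one_sum l (by simpa using hl)))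
      (fun l _ => addOne n l) (fun a ha => Finset.mem_univ _) ?_ ?_ ?_
    · intro a _
      simp only [Finset.mem_filter, Finset.mem_univ, true_and, addOne]
      exact Multiset.mem_cons_self 1 _
    · intro a ha
      simp only [Finset.mem_filter, Finset.mem_univ, true_and] at ha
      ext1
      simp only [addOne, Nat.Partition.ofSums]
      rw [Multiset.filter_eq_self.mpr, Multiset.cons_erase ha]
      intro a2 ha2
      have := a.parts_pos (Multiset.mem_of_mem_erase ha2)
      omega
    · intro a _
      ext1
      simp only [addOne, Nat.Partition.ofSums]
      rw [Multiset.erase_cons_head, Multiset.filter_eq_self.mpr]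
      intro a2 ha2
      have := a.parts_pos ha2
      omega
  have huniv : (Finset.univ : Finset (Nat.Partition (n+1))).card = partitionCount (n+1) := by
    simp [partitionCount]
  rw [huniv, hcard] at hsplit
  rw [← hsplit]
  rfl

lemma P_mono (n : ℕ) : partitionCount n ≤ partitionCount (n+1) := by
  rw [P_split n]; omega

section Lower

private def S (k : ℕ) (x : Fin k → ℕ) : ℕ := ∑ j, x j * ((j:ℕ)+2)

private def bigM (k : ℕ) (x : Fin k → ℕ) : Multiset ℕ :=
  ∑ j, Multiset.replicate (x j) ((j:ℕ)+2)

private lemma bigM_sum (k : ℕ) (x : Fin k → ℕ) : (bigM k x).sum = S k x := by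
  classical
  unfold bigM S
  rw [show ((∑ j, Multiset.replicate (x j) ((j:ℕ)+2)).sum)
      = ∑ j, (Multiset.replicate (x j) ((j:ℕ)+2)).sum from ?_]
  · refine Finset.sum_congr rfl fun j _ => ?_
    rw [Multiset.sum_replicate, smul_eq_mul]
  · induction (Finset.univ : Finset (Fin k)) using Finset.induction with
    | empty => simp
    | insert _ _ h ih => rw [Finset.sum_insert h, Finset.sum_insert h, Multiset.sum_add, ih]

private lemma bigM_count (k : ℕ) (x : Fin k → ℕ) (j : Fin k) :
    Multiset.count ((j:ℕ)+2) (bigM k x) = x j := by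
  classical
  unfold bigM
  rw [← Multiset.coe_countAddMonoidHom, map_sum]
  simp only [Multiset.coe_countAddMonoidHom, Multiset.count_replicate]
  rw [Finset.sum_congr rfl (fun (j' : Fin k) _ => show (if ((j':ℕ)+2 = (j:ℕ)+2) then x j' else 0)
      = (if (j' = j) then x j' else 0) from by
    congr 1
    simp only [eq_iff_iff]
    constructor
    · intro h; exact Fin.ext (by omega)
    · intro h; rw [h])]
  simp

private lemma bigM_mem_pos (k : ℕ) (x : Fin k → ℕ) {a : ℕ} (ha : a ∈ bigM k x) : 2 ≤ a := by
  classical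
  unfold bigM at ha
  by_contra h
  have hz : Multiset.count a (∑ j, Multiset.replicate (x j) ((j:ℕ)+2)) = 0 := by
    rw [← Multiset.coe_countAddMonoidHom, map_sum]
    refine Finset.sum_eq_zero fun j _ => ?_
    simp only [Multiset.coe_countAddMonoidHom, Multiset.count_replicate]
    rw [if_neg]; omega
  rw [← Multiset.count_pos] at ha
  omega

private def fpart (k t : ℕ) (x : Fin k → ℕ) (hx : S k x ≤ t) : Nat.Partition t where
  parts := bigM k x + Multiset.replicate (t - S k x) 1
  parts_pos := by
    intro i hi
    rcases Multiset.mem_add.mp hi with h' | h'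
    · have := bigM_mem_pos k x h'; omega
    · have := Multiset.eq_of_mem_replicate h'; omega
  parts_sum := by
    rw [Multiset.sum_add, bigM_sum, Multiset.sum_replicate, smul_eq_mul, mul_one]
    omega

private lemma fpart_count (k t : ℕ) (x : Fin k → ℕ) (hx : S k x ≤ t) (j : Fin k) :
    Multiset.count ((j:ℕ)+2) (fpart k t x hx).parts = x j := by
  show Multiset.count ((j:ℕ)+2) (bigM k x + Multiset.replicate (t - S k x) 1) = x j
  rw [Multiset.count_add, bigM_count, Multiset.count_replicate, if_neg (by omega)]
  omega

lemma P_lower (k M t : ℕ) (h : M * (k+2)^2 ≤ t) : M^k ≤ partitionCount t := by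
  classical
  set D := Fintype.piFinset (fun _ : Fin k => Finset.range M) with hD
  have hDcard : D.card = M^k := by
    rw [hD, Fintype.card_piFinset]
    simp
  have hSle : ∀ x ∈ D, S k x ≤ t := by
    intro x hx
    have hxj : ∀ j, x j ≤ M := by
      intro j
      have := Fintype.mem_piFinset.mp hx j
      simp only [Finset.mem_range] at this
      omega
    calc S k x ≤ ∑ j : Fin k, M * (k+1) := by
          refine Finset.sum_le_sum fun j _ => ?_
          have h1 : (j:ℕ) + 2 ≤ k + 1 := by have := j.2; omega
          exact Nat.mul_le_mul (hxj j) h1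
      _ = k * (M * (k+1)) := by rw [Finset.sum_const]; simp [mul_comm]
      _ ≤ M * (k+2)^2 := by ring_nf; nlinarith
      _ ≤ t := h
  rw [← hDcard]
  have hle : D.card ≤ (Finset.univ : Finset (Nat.Partition t)).card := by
    refine Finset.card_le_card_of_injOn
      (fun x => if hx : S k x ≤ t then fpart k t x hx else Nat.Partition.ofSums t {t} (by simp))
      (fun _ _ => Finset.mem_univ _) ?_
    intro x hx y hy hxy
    simp only at hxy
    rw [dif_pos (hSle x hx), dif_pos (hSle y hy)] at hxy
    funext j
    rw [← fpart_count k t x (hSle x hx) j, ← fpart_count k t y (hSle y hy) j, hxy]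
  simpa [partitionCount] using hle
end Lower

section Big
variable {t : ℕ}

private def shatter (t : ℕ) (l : Nat.Partition t) (s : ℕ)
    (h : s ∈ l.parts ∧ 1 ∉ l.parts) : Nat.Partition t where
  parts := Multiset.replicate s 1 + l.parts.erase s
  parts_pos := by
    intro i hi
    rcases Multiset.mem_add.mp hi with h' | h'
    · have := Multiset.eq_of_mem_replicate h'; omega
    · exact l.parts_pos (Multiset.mem_of_mem_erase h')
  parts_sum := by
    have hc := congrArg Multiset.sum (Multiset.cons_erase h.1)
    rw [Multiset.sum_cons, l.parts_sum] at hc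
    rw [Multiset.sum_add, Multiset.sum_replicate, smul_eq_mul, mul_one]
    omega

private lemma shatter_count (t : ℕ) (l : Nat.Partition t) (s : ℕ)
    (h : s ∈ l.parts ∧ 1 ∉ l.parts) :
    Multiset.count 1 (shatter t l s h).parts = s := by
  show Multiset.count 1 (Multiset.replicate s 1 + l.parts.erase s) = s
  rw [Multiset.count_add, Multiset.count_replicate, if_pos rfl,
    Multiset.count_eq_zero_of_notMem (fun hm => h.2 (Multiset.mem_of_mem_erase hm))]
  omega

private lemma shatter_filter (t : ℕ) (l : Nat.Partition t) (s : ℕ)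
    (h : s ∈ l.parts ∧ 1 ∉ l.parts) :
    Multiset.filter (fun a => a ≠ 1) (shatter t l s h).parts = l.parts.erase s := by
  show Multiset.filter (fun a => a ≠ 1) (Multiset.replicate s 1 + l.parts.erase s) = _
  rw [Multiset.filter_add]
  have h1 : Multiset.filter (fun a => a ≠ 1) (Multiset.replicate s 1) = 0 := by
    rw [Multiset.filter_eq_nil]
    intro a ha
    have := Multiset.eq_of_mem_replicate ha
    simp [this]
  have h2 : Multiset.filter (fun a => a ≠ 1) (l.parts.erase s) = l.parts.erase s := by
    rw [Multiset.filter_eq_self]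
    intro a ha
    exact fun he => h.2 (he ▸ Multiset.mem_of_mem_erase ha)
  rw [h1, h2, zero_add]

lemma big_bound (t m : ℕ) :
    m * ((Finset.univ.filter
      (fun l : Nat.Partition t => 1 ∉ l.parts ∧ m ≤ l.parts.toFinset.card)).card)
    ≤ partitionCount t := by
  classical
  set Qbig := (Finset.univ.filter
      (fun l : Nat.Partition t => 1 ∉ l.parts ∧ m ≤ l.parts.toFinset.card)) with hQ
  set D := Qbig.sigma (fun l => l.parts.toFinset) with hDdef
  have hcard : m * Qbig.card ≤ D.card := by
    rw [hDdef, Finset.card_sigma]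
    calc m * Qbig.card = ∑ _l ∈ Qbig, m := by rw [Finset.sum_const, smul_eq_mul, mul_comm]
      _ ≤ ∑ l ∈ Qbig, l.parts.toFinset.card := by
          refine Finset.sum_le_sum fun l hl => ?_
          rw [hQ] at hl
          exact (Finset.mem_filter.mp hl).2.2
  have hinj : D.card ≤ (Finset.univ : Finset (Nat.Partition t)).card := by
    refine Finset.card_le_card_of_injOn
      (fun z => if h : z.2 ∈ z.1.parts ∧ 1 ∉ z.1.parts then shatter t z.1 z.2 h else z.1)
      (fun _ _ => Finset.mem_univ _) ?_
    intro z hz w hw hzw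
    have hzmem := Finset.mem_sigma.mp hz
    have hwmem := Finset.mem_sigma.mp hw
    have hz1 : z.2 ∈ z.1.parts ∧ 1 ∉ z.1.parts := by
      constructor
      · exact Multiset.mem_toFinset.mp hzmem.2
      · exact ((Finset.mem_filter.mp hzmem.1).2).1
    have hw1 : w.2 ∈ w.1.parts ∧ 1 ∉ w.1.parts := by
      constructor
      · exact Multiset.mem_toFinset.mp hwmem.2
      · exact ((Finset.mem_filter.mp hwmem.1).2).1
    simp only at hzw
    rw [dif_pos hz1, dif_pos hw1] at hzw
    have hparts : (shatter t z.1 z.2 hz1).parts = (shatter t w.1 w.2 hw1).parts := by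
      rw [hzw]
    have hs : z.2 = w.2 := by
      rw [← shatter_count t z.1 z.2 hz1, ← shatter_count t w.1 w.2 hw1, hparts]
    have hl : z.1 = w.1 := by
      ext1
      have := congrArg (Multiset.filter (fun a => a ≠ 1)) hparts
      rw [shatter_filter t z.1 z.2 hz1, shatter_filter t w.1 w.2 hw1] at this
      have e1 := Multiset.cons_erase hz1.1
      have e2 := Multiset.cons_erase hw1.1
      rw [← e1, ← e2, this, hs]
    exact Sigma.ext hl (by rw [hs])
  have huniv : (Finset.univ : Finset (Nat.Partition t)).card = partitionCount t := by
    simp [partitionCount]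
  omega
end Big

lemma small_bound (t m : ℕ) :
    ((Finset.univ.filter
      (fun l : Nat.Partition t => l.parts.toFinset.card < m)).card)
    ≤ m * (t+1)^(2*m) := by
  classical
  set grid := (Finset.range (t+1)) ×ˢ (Finset.range (t+1)) with hgrid
  set B := (Finset.range m).biUnion (fun d => Finset.powersetCard d grid) with hB
  have hmaps : ∀ l : Nat.Partition t, l.parts.toFinset.card < m →
      (Multiset.toFinsupp l.parts).graph ∈ B := by
    intro l hl
    rw [hB]
    rw [Finset.mem_biUnion]
    have hcardg : (Multiset.toFinsupp l.parts).graph.card = l.parts.toFinset.card := by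
      rw [Finsupp.graph, Finset.card_map, Multiset.toFinsupp_support]
    refine ⟨(Multiset.toFinsupp l.parts).graph.card, by rw [Finset.mem_range]; omega, ?_⟩
    rw [Finset.mem_powersetCard]
    refine ⟨?_, rfl⟩
    intro p hp
    have hmem := Finsupp.mem_graph_iff.mp hp
    rw [Multiset.toFinsupp_apply] at hmem
    have hc : p.2 = l.parts.count p.1 := hmem.1.symm
    have hpmem : p.1 ∈ l.parts := by
      rw [← Multiset.count_pos]
      have := hmem.2
      omega
    have h1 : p.1 ≤ t := by
      have := Multiset.single_le_sum (fun x _ => Nat.zero_le x) _ hpmem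
      rw [l.parts_sum] at this
      exact this
    have h2 : p.2 ≤ t := by
      have hcc : l.parts.count p.1 ≤ Multiset.card l.parts := Multiset.count_le_card _ _
      have hcs : Multiset.card l.parts • 1 ≤ l.parts.sum :=
        Multiset.card_nsmul_le_sum (fun x hx => l.parts_pos hx)
      rw [smul_eq_mul, mul_one, l.parts_sum] at hcs
      omega
    rw [hgrid, Finset.mem_product, Finset.mem_range, Finset.mem_range]
    omega
  have hinj : ((Finset.univ.filter
      (fun l : Nat.Partition t => l.parts.toFinset.card < m)).card) ≤ B.card := by
    refine Finset.card_le_card_of_injOn (fun l => (Multiset.toFinsupp l.parts).graph)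
      (fun l hl => hmaps l (by simpa using (Finset.mem_filter.mp hl).2)) ?_
    intro a _ b _ hab
    have h1 := Finsupp.graph_injective _ _ hab
    have h2 := Multiset.toFinsupp.injective h1
    exact Nat.Partition.ext h2
  have hBcard : B.card ≤ m * (t+1)^(2*m) := by
    calc B.card ≤ ∑ d ∈ Finset.range m, (Finset.powersetCard d grid).card :=
          Finset.card_biUnion_le
      _ ≤ ∑ _d ∈ Finset.range m, (t+1)^(2*m) := by
          refine Finset.sum_le_sum fun d hd => ?_
          rw [Finset.card_powersetCard, hgrid, Finset.card_product, Finset.card_range]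
          calc ((t+1) * (t+1)).choose d ≤ ((t+1)*(t+1))^d := Nat.choose_le_pow _ _
            _ = (t+1)^(2*d) := by rw [two_mul, pow_add, mul_pow]
            _ ≤ (t+1)^(2*m) := Nat.pow_le_pow_right (by omega)
                (by rw [Finset.mem_range] at hd; omega)
      _ = m * (t+1)^(2*m) := by rw [Finset.sum_const, Finset.card_range, smul_eq_mul]
  omega

lemma q_bound (t m : ℕ) :
    m * Qcard t ≤ partitionCount t + m * (m * (t+1)^(2*m)) := by
  classical
  set A := (Finset.univ.filter
      (fun l : Nat.Partition t => 1 ∉ l.parts ∧ m ≤ l.parts.toFinset.card)) with hA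
  set B := (Finset.univ.filter (fun l : Nat.Partition t => l.parts.toFinset.card < m)) with hB
  have hsub : Qfin t ⊆ A ∪ B := by
    intro l hl
    rw [Qfin, Finset.mem_filter] at hl
    rw [Finset.mem_union, hA, hB, Finset.mem_filter, Finset.mem_filter]
    by_cases hd : m ≤ l.parts.toFinset.card
    · exact Or.inl ⟨Finset.mem_univ _, hl.2, hd⟩
    · exact Or.inr ⟨Finset.mem_univ _, by omega⟩
  have h1 : Qcard t ≤ A.card + B.card :=
    le_trans (Finset.card_le_card hsub) (Finset.card_union_le _ _)
  have h2 := big_bound t m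
  have h3 := small_bound t m
  rw [← hA] at h2
  rw [← hB] at h3
  have h4 : m * Qcard t ≤ m * A.card + m * B.card := by
    rw [← Nat.mul_add]
    exact Nat.mul_le_mul_left m h1
  exact le_trans h4 (Nat.add_le_add h2 (Nat.mul_le_mul_left m h3))

lemma R_tendsto (m : ℕ) (hm : 1 ≤ m) :
    Tendsto (fun t : ℕ => ((m:ℝ) * ((t:ℝ)+1)^(2*m)) / (partitionCount t : ℝ))
      atTop (nhds 0) := by
  set k := 2*m+1 with hk
  set c := (k+2)^2 with hc
  have hc1 : 1 ≤ c := by rw [hc]; exact Nat.one_le_iff_ne_zero.mpr (by positivity)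
  set C : ℝ := (m:ℝ) * 2^(2*m) * (2*(c:ℝ))^k with hC
  have key : ∀ t : ℕ, 2*c ≤ t →
      ((m:ℝ) * ((t:ℝ)+1)^(2*m)) / (partitionCount t : ℝ) ≤ C / t := by
    intro t ht
    have ht1 : 1 ≤ t := by omega
    have hPpos : (0:ℝ) < (partitionCount t : ℝ) := by exact_mod_cast Ppos t
    have htpos : (0:ℝ) < (t:ℝ) := by exact_mod_cast Nat.lt_of_lt_of_le Nat.zero_lt_one ht1
    have htr1 : (1:ℝ) ≤ (t:ℝ) := by exact_mod_cast ht1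
    rw [div_le_div_iff₀ hPpos htpos]
    have hPl : ((t/c : ℕ) : ℝ)^k ≤ (partitionCount t : ℝ) := by
      have := P_lower k (t/c) t (by
        calc (t/c) * (k+2)^2 = (t/c) * c := by rw [hc]
          _ ≤ t := Nat.div_mul_le_self t c)
      exact_mod_cast this
    have hdiv : (t:ℝ)/(2*c) ≤ ((t/c : ℕ) : ℝ) := by
      have hnat : t ≤ 2*c*(t/c) := by
        have hdm := Nat.div_add_mod t c
        have hmod : t % c < c := Nat.mod_lt t (by omega)
        have hone : 1 ≤ t/c := (Nat.one_le_div_iff (by omega)).mpr (by omega)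
        nlinarith
      rw [div_le_iff₀ (by positivity)]
      calc (t:ℝ) ≤ 2*c*((t/c:ℕ):ℝ) := by exact_mod_cast hnat
        _ = ((t/c:ℕ):ℝ) * (2*c) := by ring
    have h2 : ((t:ℝ)/(2*c))^k ≤ (partitionCount t : ℝ) :=
      le_trans (pow_le_pow_left₀ (by positivity) hdiv k) hPl
    calc (m:ℝ) * ((t:ℝ)+1)^(2*m) * t ≤ (m:ℝ) * (2*t)^(2*m) * t := by
          have hle : ((t:ℝ)+1)^(2*m) ≤ (2*t)^(2*m) :=
            pow_le_pow_left₀ (by positivity) (by linarith) _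
          exact mul_le_mul_of_nonneg_right
            (mul_le_mul_of_nonneg_left hle (by positivity)) (by positivity)
      _ = C * ((t:ℝ)/(2*c))^k := by
          rw [hC, hk]
          have hcne : (2*(c:ℝ)) ≠ 0 := by positivity
          rw [div_pow, mul_div_assoc', eq_div_iff (pow_ne_zero _ hcne)]
          ring
      _ ≤ C * (partitionCount t : ℝ) :=
          mul_le_mul_of_nonneg_left h2 (by positivity)
  have hC0 : Tendsto (fun t : ℕ => C / (t:ℝ)) atTop (nhds 0) :=
    tendsto_const_div_atTop_nhds_zero_nat C
  refine tendsto_of_tendsto_of_tendsto_of_le_of_le' tendsto_const_nhds hC0 ?_ ?_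
  · filter_upwards with t
    positivity
  · filter_upwards [eventually_ge_atTop (2*c)] with t ht
    exact key t ht

lemma qP_tendsto :
    Tendsto (fun t : ℕ => (Qcard t : ℝ) / (partitionCount t : ℝ)) atTop (nhds 0) := by
  rw [Metric.tendsto_atTop]
  intro ε hε
  set m : ℕ := ⌈(2:ℝ)/ε⌉₊ + 1 with hmdef
  have hm1 : 1 ≤ m := by omega
  have hmpos : (0:ℝ) < m := by exact_mod_cast hm1
  have hminv : (1:ℝ)/m ≤ ε/2 := by
    have h2 : (2:ℝ)/ε ≤ m := by
      rw [hmdef]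
      push_cast
      have := Nat.le_ceil ((2:ℝ)/ε)
      linarith
    rw [div_le_iff₀ hε] at h2
    rw [div_le_div_iff₀ hmpos (by norm_num : (0:ℝ) < 2)]
    linarith
  have hR := R_tendsto m hm1
  rw [Metric.tendsto_atTop] at hR
  obtain ⟨N, hN⟩ := hR (ε/4) (by positivity)
  refine ⟨N, fun t ht => ?_⟩
  have hq := q_bound t m
  have hPpos : (0:ℝ) < (partitionCount t : ℝ) := by exact_mod_cast Ppos t
  have hQnn : (0:ℝ) ≤ (Qcard t : ℝ) / (partitionCount t : ℝ) := by positivity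
  rw [Real.dist_eq, sub_zero, _root_.abs_of_nonneg hQnn]
  have hRt := hN t ht
  rw [Real.dist_eq, sub_zero] at hRt
  have hRnn : (0:ℝ) ≤ ((m:ℝ) * ((t:ℝ)+1)^(2*m)) / (partitionCount t : ℝ) := by positivity
  rw [_root_.abs_of_nonneg hRnn] at hRt
  have hcast : (m:ℝ) * (Qcard t : ℝ)
      ≤ (partitionCount t : ℝ) + (m:ℝ) * ((m:ℝ) * ((t:ℝ)+1)^(2*m)) := by
    exact_mod_cast hq
  have hQP : (Qcard t : ℝ) / (partitionCount t : ℝ)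
      ≤ 1/m + ((m:ℝ) * ((t:ℝ)+1)^(2*m)) / (partitionCount t : ℝ) := by
    rw [div_add_div _ _ (ne_of_gt hmpos) (ne_of_gt hPpos),
      div_le_div_iff₀ hPpos (by positivity)]
    nlinarith [hcast, hPpos, hmpos]
  linarith

lemma p_ratio :
    Tendsto (fun t : ℕ => (partitionCount (t+1) : ℝ) / (partitionCount t : ℝ))
      atTop (nhds 1) := by
  have hq1 : Tendsto (fun t : ℕ => (Qcard (t+1) : ℝ) / (partitionCount (t+1) : ℝ))
      atTop (nhds 0) := (tendsto_add_atTop_iff_nat 1).mpr qP_tendsto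
  have hf : Tendsto (fun t : ℕ => (partitionCount t : ℝ) / (partitionCount (t+1) : ℝ))
      atTop (nhds 1) := by
    have : (fun t : ℕ => (partitionCount t : ℝ) / (partitionCount (t+1) : ℝ))
        = (fun t : ℕ => 1 - (Qcard (t+1) : ℝ) / (partitionCount (t+1) : ℝ)) := by
      funext t
      have hs := P_split t
      have hPpos : (0:ℝ) < (partitionCount (t+1) : ℝ) := by exact_mod_cast Ppos (t+1)
      have : (partitionCount t : ℝ) = (partitionCount (t+1) : ℝ) - (Qcard (t+1) : ℝ) := by
        have : (partitionCount (t+1) : ℝ) = (partitionCount t : ℝ) + (Qcard (t+1) : ℝ) := by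
          exact_mod_cast hs
        linarith
      rw [this, sub_div, div_self (ne_of_gt hPpos)]
    rw [this]
    have := (tendsto_const_nhds (x := (1:ℝ)) (f := atTop (α := ℕ))).sub hq1
    simpa using this
  have hinv := hf.inv₀ (by norm_num)
  have : (fun t : ℕ => ((partitionCount t : ℝ) / (partitionCount (t+1) : ℝ))⁻¹)
      = (fun t : ℕ => (partitionCount (t+1) : ℝ) / (partitionCount t : ℝ)) := by
    funext t
    rw [inv_div]
  rw [this] at hinv
  simpa using hinv

lemma Vpart_one (n : ℕ) : Vpart 1 n = partitionCount n := by
  rw [Vpart, Finset.Nat.antidiagonalTuple_one, Finset.sum_singleton]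
  simp

lemma Vpart_succ (r n : ℕ) :
    Vpart (r+1) n = ∑ p ∈ Finset.HasAntidiagonal.antidiagonal n, partitionCount p.1 * Vpart r p.2 := by
  classical
  rw [Vpart]
  have : ∑ p ∈ Finset.HasAntidiagonal.antidiagonal n, partitionCount p.1 * Vpart r p.2
      = ∑ z ∈ (Finset.HasAntidiagonal.antidiagonal n).sigma
          (fun p => Finset.Nat.antidiagonalTuple r p.2),
          partitionCount z.1.1 * ∏ i, partitionCount (z.2 i) := by
    rw [Finset.sum_sigma]
    refine Finset.sum_congr rfl fun p _ => ?_
    rw [Vpart, Finset.mul_sum]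
  rw [this]
  refine (Finset.sum_nbij'
    (i := fun (z : (_ : ℕ × ℕ) × (Fin r → ℕ)) => (Fin.cons z.1.1 z.2 : Fin (r+1) → ℕ))
    (j := fun (x : Fin (r+1) → ℕ) => (⟨(x 0, ∑ i : Fin r, x i.succ), Fin.tail x⟩ :
      (_ : ℕ × ℕ) × (Fin r → ℕ)))
    ?_ ?_ ?_ ?_ ?_).symm
  · intro z hz
    rw [Finset.mem_sigma] at hz
    rw [Finset.Nat.mem_antidiagonalTuple]
    rw [Fin.sum_cons]
    have h1 := Finset.HasAntidiagonal.mem_antidiagonal.mp hz.1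
    have h2 := Finset.Nat.mem_antidiagonalTuple.mp hz.2
    rw [h2, h1]
  · intro x hx
    rw [Finset.Nat.mem_antidiagonalTuple] at hx
    rw [Finset.mem_sigma]
    constructor
    · rw [Finset.HasAntidiagonal.mem_antidiagonal]
      rw [← hx, Fin.sum_univ_succ]
    · rw [Finset.Nat.mem_antidiagonalTuple]
      simp only [Fin.tail]
  · intro z hz
    rw [Finset.mem_sigma] at hz
    have h2 := Finset.Nat.mem_antidiagonalTuple.mp hz.2
    refine Sigma.ext ?_ ?_
    · simp only [Fin.cons_zero]
      have : ∑ i : Fin r, (Fin.cons z.1.1 z.2 : Fin (r+1) → ℕ) i.succ = z.1.2 := by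
        simp only [Fin.cons_succ]
        exact h2
      rw [this]
    · simp only [Fin.cons_zero]
      have : Fin.tail (Fin.cons z.1.1 z.2 : Fin (r+1) → ℕ) = z.2 := Fin.tail_cons _ _
      exact heq_of_eq this
  · intro x hx
    exact Fin.cons_self_tail x
  · intro z hz
    rw [Fin.prod_univ_succ]
    simp only [Fin.cons_zero, Fin.cons_succ]

lemma conv_identity (r n : ℕ) :
    Vpart (r+1) (n+1) = Vpart (r+1) n + Vpart r (n+1) + Epart r n := by
  rw [Vpart_succ, Finset.Nat.antidiagonal_succ, Finset.sum_cons, Finset.sum_map]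
  simp only [Function.Embedding.coeFn_mk, Function.Embedding.prodMap,
    Function.Embedding.refl_apply, Prod.map]
  rw [P_zero, one_mul]
  have : ∀ p ∈ Finset.HasAntidiagonal.antidiagonal n,
      partitionCount (Nat.succ p.1) * Vpart r p.2
      = partitionCount p.1 * Vpart r p.2 + Qcard (p.1+1) * Vpart r p.2 := by
    intro p _
    rw [show Nat.succ p.1 = p.1 + 1 from rfl, P_split, Nat.add_mul]
  rw [Finset.sum_congr rfl this, Finset.sum_add_distrib, ← Vpart_succ, ← Epart]
  ring

lemma hqsmall (ε : ℝ) (hε : 0 < ε) :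
    ∀ᶠ x in atTop, (Qcard (x+1) : ℝ) ≤ ε * partitionCount x := by
  have h1 : ∀ᶠ x in atTop, (Qcard (x+1) : ℝ) / (partitionCount (x+1) : ℝ) ≤ ε/2 := by
    have := (tendsto_add_atTop_iff_nat 1).mpr qP_tendsto
    have := this.eventually_le_const (show (0:ℝ) < ε/2 by positivity)
    exact this
  have h2 : ∀ᶠ x in atTop, (partitionCount (x+1) : ℝ) ≤ 2 * partitionCount x := by
    have := p_ratio.eventually_le_const (show (1:ℝ) < 2 by norm_num)
    filter_upwards [this] with x hx
    have hP : (0:ℝ) < (partitionCount x : ℝ) := by exact_mod_cast Ppos x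
    rw [div_le_iff₀ hP] at hx
    linarith
  filter_upwards [h1, h2] with x hx1 hx2
  have hP1 : (0:ℝ) < (partitionCount (x+1) : ℝ) := by exact_mod_cast Ppos (x+1)
  rw [div_le_iff₀ hP1] at hx1
  calc (Qcard (x+1) : ℝ) ≤ ε/2 * (partitionCount (x+1) : ℝ) := hx1
    _ ≤ ε/2 * (2 * partitionCount x) := by
        refine mul_le_mul_of_nonneg_left hx2 (by positivity)
    _ = ε * partitionCount x := by ring

lemma window_bound (f : ℕ → ℝ) (ρ : ℝ) (hρ : 0 ≤ ρ) (N : ℕ)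
    (h : ∀ m, N ≤ m → f (m+1) ≤ ρ * f m) :
    ∀ j n, N ≤ n → f (n+j) ≤ ρ^j * f n := by
  intro j
  induction j with
  | zero => intro n hn; simp
  | succ j ih =>
    intro n hn
    have h1 : f (n+j+1) ≤ ρ * f (n+j) := h (n+j) (by omega)
    have h2 := ih n hn
    calc f (n + (j+1)) = f (n+j+1) := by ring_nf
      _ ≤ ρ * f (n+j) := h1
      _ ≤ ρ * (ρ^j * f n) := mul_le_mul_of_nonneg_left h2 hρ
      _ = ρ^(j+1) * f n := by ring

lemma c_lower (r n J : ℕ) (hJ : J ≤ n)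
    (hmono : Monotone (Vpart r)) :
    (J+1) * Vpart r (n-J) ≤ Vpart (r+1) n := by
  classical
  set B := (Finset.range (J+1)).image (fun j => (j, n-j)) with hB
  have hBsub : B ⊆ Finset.HasAntidiagonal.antidiagonal n := by
    intro p hp
    rw [hB, Finset.mem_image] at hp
    obtain ⟨j, hj, rfl⟩ := hp
    rw [Finset.mem_range] at hj
    rw [Finset.HasAntidiagonal.mem_antidiagonal]
    omega
  have hinj : Set.InjOn (fun j => (j, n-j)) (Finset.range (J+1)) := by
    intro a _ b _ hab
    exact (Prod.mk.injEq _ _ _ _).mp hab |>.1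
  calc (J+1) * Vpart r (n-J) = ∑ _j ∈ Finset.range (J+1), Vpart r (n-J) := by
        rw [Finset.sum_const, Finset.card_range, smul_eq_mul]
    _ ≤ ∑ j ∈ Finset.range (J+1), partitionCount j * Vpart r (n-j) := by
        refine Finset.sum_le_sum fun j hj => ?_
        rw [Finset.mem_range] at hj
        have h1 : 1 ≤ partitionCount j := Ppos j
        have h2 : Vpart r (n-J) ≤ Vpart r (n-j) := hmono (by omega)
        calc Vpart r (n-J) = 1 * Vpart r (n-J) := (one_mul _).symm
          _ ≤ partitionCount j * Vpart r (n-j) := Nat.mul_le_mul h1 h2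
    _ = ∑ p ∈ B, partitionCount p.1 * Vpart r p.2 := by
        rw [hB, Finset.sum_image hinj]
    _ ≤ ∑ p ∈ Finset.HasAntidiagonal.antidiagonal n, partitionCount p.1 * Vpart r p.2 :=
        Finset.sum_le_sum_of_subset hBsub
    _ = Vpart (r+1) n := (Vpart_succ r n).symm

lemma top_count (n T : ℕ) :
    ((Finset.HasAntidiagonal.antidiagonal n).filter (fun p => p.1 < T)).card ≤ T := by
  classical
  have hsub : (Finset.HasAntidiagonal.antidiagonal n).filter (fun p => p.1 < T)
      ⊆ (Finset.range T).image (fun j => (j, n-j)) := by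
    intro p hp
    rw [Finset.mem_filter, Finset.HasAntidiagonal.mem_antidiagonal] at hp
    rw [Finset.mem_image]
    exact ⟨p.1, Finset.mem_range.mpr hp.2, by
      have : p.2 = n - p.1 := by omega
      rw [← this]⟩
  calc _ ≤ ((Finset.range T).image (fun j => (j, n-j))).card := Finset.card_le_card hsub
    _ ≤ (Finset.range T).card := Finset.card_image_le
    _ = T := Finset.card_range T

lemma Vpos_succ (r : ℕ) (h1 : ∀ n, 1 ≤ Vpart r n) : ∀ n, 1 ≤ Vpart (r+1) n := by
  intro n
  rw [Vpart_succ]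
  calc 1 ≤ partitionCount 0 * Vpart r n := Nat.one_le_iff_ne_zero.mpr
        (Nat.mul_ne_zero (Nat.pos_iff_ne_zero.mp (Ppos 0))
          (Nat.pos_iff_ne_zero.mp (h1 n)))
    _ ≤ ∑ p ∈ Finset.HasAntidiagonal.antidiagonal n, partitionCount p.1 * Vpart r p.2 := by
        refine Finset.single_le_sum (f := fun p : ℕ × ℕ => partitionCount p.1 * Vpart r p.2)
          (fun p _ => Nat.zero_le _) (a := ((0:ℕ), n))
          (Finset.HasAntidiagonal.mem_antidiagonal.mpr (by omega))

lemma Vmono_succ (r : ℕ) : Monotone (Vpart (r+1)) := by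
  refine monotone_nat_of_le_succ fun n => ?_
  rw [conv_identity r n]
  omega

lemma step_ratio (r : ℕ) (h1 : ∀ n, 1 ≤ Vpart r n) (hmono : Monotone (Vpart r))
    (hrat : Tendsto (fun n : ℕ => (Vpart r (n+1) : ℝ) / (Vpart r n : ℝ)) atTop (nhds 1)) :
    Tendsto (fun n : ℕ => (Vpart (r+1) (n+1) : ℝ) / (Vpart (r+1) n : ℝ)) atTop (nhds 1) := by
  have hVpos : ∀ n, (0:ℝ) < (Vpart r n : ℝ) := fun n => by exact_mod_cast h1 n
  have hcpos : ∀ n, (0:ℝ) < (Vpart (r+1) n : ℝ) := fun n => by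
    exact_mod_cast Vpos_succ r h1 n
  rw [Metric.tendsto_atTop]
  intro εbar hεbar
  set ε := min (εbar/2) (1/2) with hεdef
  have hε : 0 < ε := by
    rw [hεdef]
    apply lt_min (by positivity) (by norm_num)
  have hεle : ε ≤ εbar/2 := min_le_left _ _
  -- (i) smallness of Q against P
  obtain ⟨T, hT⟩ := (hqsmall (ε/4) (by positivity)).exists_forall_of_atTop
  -- (ii) constant bounding Q below T
  set C₀ : ℕ := ∑ x ∈ Finset.range T, Qcard (x+1) with hC₀
  have hC₀le : ∀ x, x < T → Qcard (x+1) ≤ C₀ := by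
    intro x hx
    rw [hC₀]
    exact Finset.single_le_sum (f := fun x => Qcard (x+1)) (fun _ _ => Nat.zero_le _)
      (Finset.mem_range.mpr hx)
  set K : ℝ := (C₀ : ℝ) * T + 2 with hK
  have hKpos : 0 < K := by rw [hK]; positivity
  -- (v) window parameters
  set J : ℕ := ⌈3*K/(ε/2)⌉₊ + 1 with hJ
  have hJpos : 0 < J := by omega
  set ρ : ℝ := Real.exp ((J:ℝ)⁻¹) with hρ
  have hρ1 : 1 < ρ := by
    rw [hρ]
    rw [show (1:ℝ) = Real.exp 0 from (Real.exp_zero).symm]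
    exact Real.exp_lt_exp.mpr (by positivity)
  have hρJ : ρ^J ≤ 3 := by
    rw [hρ, ← Real.exp_nat_mul]
    calc Real.exp (J * (J:ℝ)⁻¹) = Real.exp 1 := by
          rw [mul_inv_cancel₀ (by exact_mod_cast Nat.pos_iff_ne_zero.mp hJpos)]
      _ ≤ 3 := by
          have := Real.exp_one_lt_d9
          linarith
  -- eventually V(m+1) ≤ ρ V m  and V(m+1) ≤ 2 V m
  have hVev : ∀ᶠ m in atTop, (Vpart r (m+1) : ℝ) ≤ ρ * Vpart r m := by
    filter_upwards [hrat.eventually_le_const hρ1] with m hm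
    rw [div_le_iff₀ (hVpos m)] at hm
    linarith
  have hVev2 : ∀ᶠ m in atTop, (Vpart r (m+1) : ℝ) ≤ 2 * Vpart r m := by
    filter_upwards [hrat.eventually_le_const (show (1:ℝ) < 2 by norm_num)] with m hm
    rw [div_le_iff₀ (hVpos m)] at hm
    linarith
  obtain ⟨N₁, hN₁⟩ := hVev.exists_forall_of_atTop
  obtain ⟨N₂, hN₂⟩ := hVev2.exists_forall_of_atTop
  -- window bound: for n ≥ N₁ + J : V n ≤ 3 V (n-J)
  have hwin : ∀ n, N₁ + J ≤ n → (Vpart r n : ℝ) ≤ 3 * Vpart r (n-J) := by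
    intro n hn
    have h3 := window_bound (fun m => (Vpart r m : ℝ)) ρ (le_of_lt (lt_trans one_pos hρ1))
      N₁ (fun m hm => hN₁ m hm) J (n-J) (by omega)
    have heq : n - J + J = n := by omega
    rw [heq] at h3
    calc (Vpart r n : ℝ) ≤ ρ^J * Vpart r (n-J) := h3
      _ ≤ 3 * Vpart r (n-J) :=
          mul_le_mul_of_nonneg_right hρJ (le_of_lt (hVpos _))
  -- main eventual estimate
  rw [eventually_atTop] at *
  refine ⟨max (max (N₁+J) (N₂+1)) (max T J) + 1, fun n hn => ?_⟩
  have hnT : T ≤ n := by omega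
  have hnJ : J ≤ n := by omega
  have hnN₁ : N₁ + J ≤ n := by omega
  have hnN₂ : N₂ ≤ n := by omega
  -- Bound E n
  have hEsplit : (Epart r n : ℝ)
      ≤ (ε/4) * (Vpart (r+1) n : ℝ) + (C₀ : ℝ) * T * (Vpart r n : ℝ) := by
    have hE : (Epart r n : ℝ)
        = ∑ p ∈ Finset.HasAntidiagonal.antidiagonal n, (Qcard (p.1+1) : ℝ) * (Vpart r p.2 : ℝ) := by
      rw [Epart]
      push_cast
      rfl
    rw [hE, ← Finset.sum_filter_add_sum_filter_not (Finset.HasAntidiagonal.antidiagonal n)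
      (fun p : ℕ × ℕ => T ≤ p.1)]
    have hbound1 : ∑ p ∈ (Finset.HasAntidiagonal.antidiagonal n).filter (fun p => T ≤ p.1),
        (Qcard (p.1+1) : ℝ) * (Vpart r p.2 : ℝ)
        ≤ (ε/4) * (Vpart (r+1) n : ℝ) := by
      calc ∑ p ∈ (Finset.HasAntidiagonal.antidiagonal n).filter (fun p => T ≤ p.1),
            (Qcard (p.1+1) : ℝ) * (Vpart r p.2 : ℝ)
          ≤ ∑ p ∈ (Finset.HasAntidiagonal.antidiagonal n).filter (fun p => T ≤ p.1),
            (ε/4) * ((partitionCount p.1 : ℝ) * (Vpart r p.2 : ℝ)) := by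
            refine Finset.sum_le_sum fun p hp => ?_
            rw [Finset.mem_filter] at hp
            have := hT p.1 hp.2
            rw [← mul_assoc]
            exact mul_le_mul_of_nonneg_right this (by positivity)
        _ ≤ ∑ p ∈ Finset.HasAntidiagonal.antidiagonal n,
            (ε/4) * ((partitionCount p.1 : ℝ) * (Vpart r p.2 : ℝ)) := by
            refine Finset.sum_le_sum_of_subset_of_nonneg (Finset.filter_subset _ _) ?_
            intro p _ _
            positivity
        _ = (ε/4) * (Vpart (r+1) n : ℝ) := by
            rw [← Finset.mul_sum, Vpart_succ]
            push_cast
            rfl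
    have hbound2 : ∑ p ∈ (Finset.HasAntidiagonal.antidiagonal n).filter (fun p => ¬ T ≤ p.1),
        (Qcard (p.1+1) : ℝ) * (Vpart r p.2 : ℝ)
        ≤ (C₀ : ℝ) * T * (Vpart r n : ℝ) := by
      calc ∑ p ∈ (Finset.HasAntidiagonal.antidiagonal n).filter (fun p => ¬ T ≤ p.1),
            (Qcard (p.1+1) : ℝ) * (Vpart r p.2 : ℝ)
          ≤ ∑ _p ∈ (Finset.HasAntidiagonal.antidiagonal n).filter (fun p => ¬ T ≤ p.1),
            (C₀ : ℝ) * (Vpart r n : ℝ) := by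
            refine Finset.sum_le_sum fun p hp => ?_
            rw [Finset.mem_filter, Finset.HasAntidiagonal.mem_antidiagonal] at hp
            have hq : (Qcard (p.1+1) : ℝ) ≤ (C₀ : ℝ) := by
              exact_mod_cast hC₀le p.1 (by omega)
            have hv : (Vpart r p.2 : ℝ) ≤ (Vpart r n : ℝ) := by
              exact_mod_cast hmono (show p.2 ≤ n by omega)
            exact mul_le_mul hq hv (by positivity) (by positivity)
        _ = ((Finset.HasAntidiagonal.antidiagonal n).filter (fun p => ¬ T ≤ p.1)).card
            * ((C₀ : ℝ) * (Vpart r n : ℝ)) := by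
            rw [Finset.sum_const, nsmul_eq_mul]
        _ ≤ (C₀ : ℝ) * T * (Vpart r n : ℝ) := by
            have hcount : ((Finset.HasAntidiagonal.antidiagonal n).filter (fun p => ¬ T ≤ p.1)).card ≤ T := by
              have hsub2 : (Finset.HasAntidiagonal.antidiagonal n).filter (fun p => ¬ T ≤ p.1)
                  ⊆ (Finset.HasAntidiagonal.antidiagonal n).filter (fun p => p.1 < T) := by
                intro p hp
                rw [Finset.mem_filter] at hp ⊢
                exact ⟨hp.1, by omega⟩
              exact le_trans (Finset.card_le_card hsub2) (top_count n T)
            have hc : (((Finset.HasAntidiagonal.antidiagonal n).filter (fun p => ¬ T ≤ p.1)).card : ℝ)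
                ≤ (T : ℝ) := by exact_mod_cast hcount
            calc _ ≤ (T:ℝ) * ((C₀ : ℝ) * (Vpart r n : ℝ)) := by
                  refine mul_le_mul_of_nonneg_right hc (by positivity)
              _ = (C₀ : ℝ) * T * (Vpart r n : ℝ) := by ring
    linarith
  -- V n ≤ 3 c n / (J+1)
  have hVc : (J+1 : ℝ) * (Vpart r (n-J) : ℝ) ≤ (Vpart (r+1) n : ℝ) := by
    exact_mod_cast c_lower r n J hnJ hmono
  have hVn : (Vpart r n : ℝ) ≤ 3 * Vpart r (n-J) := hwin n hnN₁
  have hKV : K * (Vpart r n : ℝ) ≤ (ε/2) * (Vpart (r+1) n : ℝ) := by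
    have hJge : 3*K/(ε/2) ≤ ((J:ℝ)+1) := by
      rw [hJ]
      push_cast
      have := Nat.le_ceil (3*K/(ε/2))
      linarith
    have h5 : K * (Vpart r n : ℝ) ≤ K * (3 * Vpart r (n-J)) :=
      mul_le_mul_of_nonneg_left hVn (le_of_lt hKpos)
    have h6 : 3*K ≤ (ε/2) * ((J:ℝ)+1) := by
      rw [div_le_iff₀ (by positivity)] at hJge
      linarith
    calc K * (Vpart r n : ℝ) ≤ 3*K * Vpart r (n-J) := by linarith
      _ ≤ (ε/2) * ((J:ℝ)+1) * Vpart r (n-J) :=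
          mul_le_mul_of_nonneg_right h6 (le_of_lt (hVpos _))
      _ = (ε/2) * (((J:ℝ)+1) * Vpart r (n-J)) := by ring
      _ ≤ (ε/2) * (Vpart (r+1) n : ℝ) := by
          refine mul_le_mul_of_nonneg_left ?_ (by positivity)
          exact_mod_cast hVc
  -- V (n+1) ≤ 2 V n
  have hV2 : (Vpart r (n+1) : ℝ) ≤ 2 * Vpart r n := hN₂ n hnN₂
  -- put together
  have hdelta : (Vpart r (n+1) : ℝ) + (Epart r n : ℝ) ≤ ε * (Vpart (r+1) n : ℝ) := by
    have : (Vpart r (n+1) : ℝ) + (Epart r n : ℝ)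
        ≤ (ε/4) * (Vpart (r+1) n : ℝ) + K * (Vpart r n : ℝ) := by
      rw [hK]
      have := hEsplit
      nlinarith [hVpos n]
    calc (Vpart r (n+1) : ℝ) + (Epart r n : ℝ)
        ≤ (ε/4) * (Vpart (r+1) n : ℝ) + K * (Vpart r n : ℝ) := this
      _ ≤ (ε/4) * (Vpart (r+1) n : ℝ) + (ε/2) * (Vpart (r+1) n : ℝ) := by linarith
      _ ≤ ε * (Vpart (r+1) n : ℝ) := by
          have := hcpos n
          nlinarith
  -- conclude
  have hid : (Vpart (r+1) (n+1) : ℝ)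
      = (Vpart (r+1) n : ℝ) + ((Vpart r (n+1) : ℝ) + (Epart r n : ℝ)) := by
    have hnat : (Vpart (r+1) (n+1) : ℝ)
        = (Vpart (r+1) n : ℝ) + (Vpart r (n+1) : ℝ) + (Epart r n : ℝ) := by
      exact_mod_cast conv_identity r n
    linarith
  have hratio : (Vpart (r+1) (n+1) : ℝ) / (Vpart (r+1) n : ℝ) - 1
      = ((Vpart r (n+1) : ℝ) + (Epart r n : ℝ)) / (Vpart (r+1) n : ℝ) := by
    rw [hid, add_div, div_self (ne_of_gt (hcpos n))]
    ring
  rw [Real.dist_eq]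
  have hnn : (0:ℝ) ≤ ((Vpart r (n+1) : ℝ) + (Epart r n : ℝ)) / (Vpart (r+1) n : ℝ) := by
    positivity
  rw [hratio, _root_.abs_of_nonneg hnn]
  rw [div_lt_iff₀ (hcpos n)]
  calc (Vpart r (n+1) : ℝ) + (Epart r n : ℝ) ≤ ε * (Vpart (r+1) n : ℝ) := hdelta
    _ ≤ εbar/2 * (Vpart (r+1) n : ℝ) := mul_le_mul_of_nonneg_right hεle (le_of_lt (hcpos n))
    _ < εbar * (Vpart (r+1) n : ℝ) := by
        have := hcpos n
        nlinarith

lemma main_induction (r : ℕ) (hr : 1 ≤ r) :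
    (∀ n, 1 ≤ Vpart r n) ∧ Monotone (Vpart r) ∧
    Filter.Tendsto (fun n : ℕ => (Vpart r (n+1) : ℝ) / (Vpart r n : ℝ))
      Filter.atTop (nhds 1) := by
  induction r, hr using Nat.le_induction with
  | base =>
    have hV : Vpart 1 = partitionCount := funext Vpart_one
    rw [hV]
    exact ⟨fun n => Ppos n, monotone_nat_of_le_succ P_mono, p_ratio⟩
  | succ r hr ih =>
    obtain ⟨ih1, ih2, ih3⟩ := ih
    exact ⟨Vpos_succ r ih1, Vmono_succ r, step_ratio r ih1 ih2 ih3⟩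

end PartAux

theorem stmt18 (r : ℕ) (hr : 1 ≤ r) :
    Filter.Tendsto (fun n : ℕ => (Vpart r n : ℝ) / (Vpart r (n - 1) : ℝ))
      Filter.atTop (nhds 1) := by
  have h := (PartAux.main_induction r hr).2.2
  have h2 : Filter.Tendsto (fun n : ℕ => (Vpart r (n+1) : ℝ) / (Vpart r ((n+1) - 1) : ℝ))
      Filter.atTop (nhds 1) := by simpa using h
  exact (Filter.tendsto_add_atTop_iff_nat 1).mp h2
end

section
/- Let r ≥ 1 be an integer and let V_r(n) = Σ_{(x_1,…,x_r) ∈ ℕ₀^r, x_1+⋯+x_r = n} Π_{i=1}^r P(x_i). Then lim_{n→∞} V_{r−1}(n)/V_r(n) = 0. -/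
open Complex Finset Filter
open scoped Classical

def chop : ℕ → List ℕ → List ℕ × Multiset ℕ
  | _, [] => ([], 0)
  | j, a :: t =>
    if j = 0 then (a :: t, 0)
    else if a ≤ j then
      let r := chop (j - a) t
      (r.1, a ::ₘ r.2)
    else (List.replicate (a - j) 1 ++ t, 0)

def decChop (j : ℕ) (μ γ : Multiset ℕ) : Multiset ℕ :=
  if j - γ.sum = 0 then μ + γ
  else μ.filter (· ≠ 1) + {μ.count 1 + (j - γ.sum)} + γ

lemma chop_spec : ∀ (l : List ℕ) (j : ℕ), l.Pairwise (· ≤ ·) → (∀ x ∈ l, 0 < x) →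
    j ≤ l.sum →
    (∀ x ∈ (chop j l).1, 0 < x) ∧ ((chop j l).1.sum = l.sum - j) ∧
    (chop j l).2.sum ≤ j ∧ (∀ x ∈ (chop j l).2, 0 < x) ∧
    (l : Multiset ℕ) = decChop j ((chop j l).1 : Multiset ℕ) (chop j l).2
  | [], j, _, _, hj => by
    simp only [List.sum_nil, Nat.le_zero] at hj
    subst hj
    simp [chop, decChop]
  | a :: t, j, hs, hpos, hj => by
    rcases eq_or_ne j 0 with rfl | hj0
    · refine ⟨?_, ?_, ?_, ?_, ?_⟩ <;> simp [chop, decChop]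
      exact ⟨hpos a (List.mem_cons_self), fun x hx => hpos x (List.mem_cons_of_mem _ hx)⟩
    rw [List.pairwise_cons] at hs
    by_cases haj : a ≤ j
    · -- recursive case
      have ht : j - a ≤ t.sum := by
        simp only [List.sum_cons] at hj; omega
      obtain ⟨h1, h2, h3, h4, h5⟩ := chop_spec t (j - a) hs.2 (fun x hx => hpos x (List.mem_cons_of_mem _ hx)) ht
      have hchop : chop j (a :: t) = ((chop (j-a) t).1, a ::ₘ (chop (j-a) t).2) := by
        simp [chop, hj0, haj]
      rw [hchop]
      refine ⟨h1, ?_, ?_, ?_, ?_⟩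
      · simp only [List.sum_cons] at hj ⊢
        omega
      · simp only [Multiset.sum_cons]
        omega
      · intro x hx
        rw [Multiset.mem_cons] at hx
        rcases hx with rfl | hx
        · exact hpos x (List.mem_cons_self)
        · exact h4 x hx
      · -- decode equation
        simp only [decChop, Multiset.sum_cons] at h5 ⊢
        have hy : j - (a + (chop (j-a) t).2.sum) = (j - a) - (chop (j-a) t).2.sum := by omega
        rw [hy]
        by_cases hy0 : (j - a) - (chop (j-a) t).2.sum = 0
        · rw [if_pos hy0] at h5 ⊢
          rw [← Multiset.cons_coe, h5]
          simp only [← Multiset.singleton_add]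
          abel
        · rw [if_neg hy0] at h5 ⊢
          rw [← Multiset.cons_coe, h5]
          simp only [← Multiset.singleton_add]
          abel
    · -- split case
      push_neg at haj
      have ha1 : 1 < a := lt_of_le_of_lt (Nat.one_le_iff_ne_zero.mpr hj0) haj
      have hchop : chop j (a :: t) = (List.replicate (a - j) 1 ++ t, 0) := by
        simp [chop, hj0, not_le.mpr haj]
      rw [hchop]
      have ht2 : ∀ x ∈ t, 2 ≤ x := fun x hx => le_trans ha1 (hs.1 x hx)
      refine ⟨?_, ?_, by simp, by simp, ?_⟩
      · intro x hx
        rw [List.mem_append] at hx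
        rcases hx with hx | hx
        · rw [List.eq_of_mem_replicate hx]; norm_num
        · exact hpos x (List.mem_cons_of_mem _ hx)
      · simp only [List.sum_append, List.sum_replicate, smul_eq_mul, mul_one, List.sum_cons]
        omega
      · simp only [decChop, Multiset.sum_zero, Nat.sub_zero, hj0, if_false]
        have hcoe : ((List.replicate (a - j) 1 ++ t : List ℕ) : Multiset ℕ)
            = Multiset.replicate (a - j) 1 + (t : Multiset ℕ) := by
          rw [← Multiset.coe_add, Multiset.coe_replicate]
        rw [hcoe]
        have hcount : (Multiset.replicate (a - j) 1 + (↑t : Multiset ℕ)).count 1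
            = a - j := by
          rw [Multiset.count_add, Multiset.count_replicate]
          simp only [if_true, eq_self_iff_true]
          have : (↑t : Multiset ℕ).count 1 = 0 := by
            rw [Multiset.count_eq_zero]
            intro h
            have := ht2 1 (by exact_mod_cast h)
            omega
          simp [this]
        have hfilter : (Multiset.replicate (a - j) 1 + (↑t : Multiset ℕ)).filter (· ≠ 1)
            = ↑t := by
          rw [Multiset.filter_add]
          have h1 : (Multiset.replicate (a - j) 1).filter (· ≠ 1) = 0 := by
            rw [Multiset.filter_eq_nil]
            intro x hx
            rw [Multiset.eq_of_mem_replicate hx]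
            simp
          have h2 : (↑t : Multiset ℕ).filter (· ≠ 1) = ↑t := by
            rw [Multiset.filter_eq_self]
            intro x hx
            have := ht2 x (by exact_mod_cast hx)
            omega
          rw [h1, h2, zero_add]
        rw [hcount, hfilter]
        have : a - j + j = a := by omega
        rw [this, ← Multiset.cons_coe]
        simp only [← Multiset.singleton_add]
        abel

lemma partitionCount_pos (n : ℕ) : 0 < partitionCount n :=
  Fintype.card_pos_iff.mpr ⟨default⟩

lemma partitionCount_mono {a b : ℕ} (h : a ≤ b) : partitionCount a ≤ partitionCount b := by
  rcases eq_or_lt_of_le h with rfl | hlt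
  · exact le_refl _
  · exact Fintype.card_le_of_injective
      (fun lam => ⟨(b - a) ::ₘ lam.parts, by
        intro i hi
        rw [Multiset.mem_cons] at hi
        rcases hi with rfl | hi
        · omega
        · exact lam.parts_pos hi, by
        rw [Multiset.sum_cons, lam.parts_sum]; omega⟩)
      (by
        intro x y hxy
        have := congrArg Nat.Partition.parts hxy
        simp only [Multiset.cons_inj_right] at this
        exact Nat.Partition.ext this)

variable {m : ℕ}

lemma sortedL (lam : Nat.Partition m) : (lam.parts.sort (· ≤ ·)).Pairwise (· ≤ ·) :=
  lam.parts.pairwise_sort _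

lemma coeL (lam : Nat.Partition m) : ((lam.parts.sort (· ≤ ·) : List ℕ) : Multiset ℕ) = lam.parts :=
  lam.parts.sort_eq _

lemma posL (lam : Nat.Partition m) : ∀ x ∈ lam.parts.sort (· ≤ ·), 0 < x := fun x hx =>
  lam.parts_pos (by rw [← coeL lam]; exact_mod_cast hx)

lemma sumL (lam : Nat.Partition m) : (lam.parts.sort (· ≤ ·)).sum = m := by
  rw [← Multiset.sum_coe, coeL lam, lam.parts_sum]

lemma chop_specP (j m : ℕ) (hj : j ≤ m) (lam : Nat.Partition m) :
    (∀ x ∈ (chop j (lam.parts.sort (· ≤ ·))).1, 0 < x) ∧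
    ((chop j (lam.parts.sort (· ≤ ·))).1.sum = m - j) ∧
    (chop j (lam.parts.sort (· ≤ ·))).2.sum ≤ j ∧
    (∀ x ∈ (chop j (lam.parts.sort (· ≤ ·))).2, 0 < x) ∧
    lam.parts = decChop j ((chop j (lam.parts.sort (· ≤ ·))).1 : Multiset ℕ)
      (chop j (lam.parts.sort (· ≤ ·))).2 := by
  have h := chop_spec (lam.parts.sort (· ≤ ·)) j (sortedL lam) (posL lam)
    (by rw [sumL lam]; exact hj)
  rw [sumL lam, coeL lam] at h
  exact h

def encodePart (j m : ℕ) (hj : j ≤ m) (lam : Nat.Partition m) :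
    Nat.Partition (m - j) × ((u : Fin (j + 1)) × Nat.Partition u) :=
  (⟨((chop j (lam.parts.sort (· ≤ ·))).1 : Multiset ℕ),
      fun hi => (chop_specP j m hj lam).1 _ (Multiset.mem_coe.mp hi), by
      rw [Multiset.sum_coe]
      exact (chop_specP j m hj lam).2.1⟩,
    ⟨⟨(chop j (lam.parts.sort (· ≤ ·))).2.sum,
        Nat.lt_succ_of_le (chop_specP j m hj lam).2.2.1⟩,
      ⟨(chop j (lam.parts.sort (· ≤ ·))).2,
        fun hi => (chop_specP j m hj lam).2.2.2.1 _ hi, rfl⟩⟩)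

lemma encodePart_decode (j m : ℕ) (hj : j ≤ m) (lam : Nat.Partition m) :
    lam.parts = decChop j (encodePart j m hj lam).1.parts (encodePart j m hj lam).2.2.parts := by
  have e1 : (encodePart j m hj lam).1.parts
      = ((chop j (lam.parts.sort (· ≤ ·))).1 : Multiset ℕ) := rfl
  have e2 : (encodePart j m hj lam).2.2.parts = (chop j (lam.parts.sort (· ≤ ·))).2 := rfl
  rw [e1, e2]
  exact (chop_specP j m hj lam).2.2.2.2

lemma split_card {m j : ℕ} (hj : j ≤ m) :
    partitionCount m ≤ partitionCount (m - j) * ∑ u ∈ range (j + 1), partitionCount u := by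
  classical
  have key : partitionCount m ≤ Fintype.card
      (Nat.Partition (m - j) × ((u : Fin (j + 1)) × Nat.Partition u)) := by
    apply Fintype.card_le_of_injective (encodePart j m hj)
    intro x y hxy
    have hfst : (encodePart j m hj x).1.parts = (encodePart j m hj y).1.parts := by
      rw [hxy]
    have hsnd : (encodePart j m hj x).2.2.parts = (encodePart j m hj y).2.2.parts := by
      rw [hxy]
    apply Nat.Partition.ext
    rw [encodePart_decode j m hj x, encodePart_decode j m hj y, hfst, hsnd]
  calc partitionCount m ≤ _ := key
    _ = partitionCount (m - j) * ∑ u ∈ range (j + 1), partitionCount u := by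
        rw [Fintype.card_prod, Fintype.card_sigma]
        unfold partitionCount
        rw [Fin.sum_univ_eq_sum_range (fun u => Fintype.card (Nat.Partition u))]

lemma Vpart_pos {s : ℕ} (hs : 1 ≤ s) (n : ℕ) : 0 < Vpart s n := by
  classical
  obtain ⟨s', rfl⟩ : ∃ s', s = s' + 1 := ⟨s - 1, by omega⟩
  apply Finset.sum_pos'
  · intro x _
    exact Nat.zero_le _
  · refine ⟨Fin.cons n 0, ?_, ?_⟩
    · rw [Finset.Nat.mem_antidiagonalTuple]
      rw [Fin.sum_cons]
      simp
    · exact Finset.prod_pos fun i _ => partitionCount_pos _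

lemma Vpart_conv_ge {s n M : ℕ} (hM : M ≤ n) :
    ∑ j ∈ range (M + 1), partitionCount j * Vpart s (n - j) ≤ Vpart (s + 1) n := by
  classical
  have expand : ∑ j ∈ range (M + 1), partitionCount j * Vpart s (n - j)
      = ∑ z ∈ (range (M + 1)).sigma (fun j => Finset.Nat.antidiagonalTuple s (n - j)),
          partitionCount z.1 * ∏ i, partitionCount (z.2 i) := by
    rw [Finset.sum_sigma]
    apply Finset.sum_congr rfl
    intro j _
    rw [Vpart, Finset.mul_sum]
  rw [expand]
  set C := (range (M + 1)).sigma (fun j => Finset.Nat.antidiagonalTuple s (n - j)) with hC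
  let ψ : (Σ _j : ℕ, Fin s → ℕ) → (Fin (s + 1) → ℕ) := fun z => Fin.cons z.1 z.2
  have hval : ∀ z : (Σ _j : ℕ, Fin s → ℕ), partitionCount z.1 * ∏ i, partitionCount (z.2 i) = ∏ i, partitionCount (ψ z i) := by
    intro z
    rw [Fin.prod_univ_succ]
    simp [ψ]
  have himg : ∀ z ∈ C, ψ z ∈ Finset.Nat.antidiagonalTuple (s + 1) n := by
    intro z hz
    rw [hC, Finset.mem_sigma] at hz
    rw [Finset.Nat.mem_antidiagonalTuple, Fin.sum_univ_succ]
    simp only [ψ, Fin.cons_zero, Fin.cons_succ]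
    have h2 := Finset.Nat.mem_antidiagonalTuple.mp hz.2
    have h1 : z.1 ≤ M := by have := Finset.mem_range.mp hz.1; omega
    omega
  have hinj : Set.InjOn ψ C := by
    intro z _ w _ hzw
    have h0 := congrFun hzw 0
    simp only [ψ, Fin.cons_zero] at h0
    have hs : z.2 = w.2 := by
      funext i
      have := congrFun hzw i.succ
      simpa [ψ, Fin.cons_succ] using this
    exact Sigma.ext h0 (heq_of_eq hs)
  calc ∑ z ∈ C, partitionCount z.1 * ∏ i, partitionCount (z.2 i) = ∑ z ∈ C, ∏ i, partitionCount (ψ z i) := by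
        exact Finset.sum_congr rfl fun z _ => hval z
    _ = ∑ x ∈ C.image ψ, ∏ i, partitionCount (x i) := by
        rw [Finset.sum_image (fun a ha b hb h => hinj ha hb h)]
    _ ≤ Vpart (s + 1) n := by
        apply Finset.sum_le_sum_of_subset
        intro x hx
        rw [Finset.mem_image] at hx
        obtain ⟨z, hz, rfl⟩ := hx
        exact himg z hz

lemma Vpart_le {s j n : ℕ} (hs : 1 ≤ s) (hsj : s * j ≤ n) :
    Vpart s n ≤ s * ((∑ u ∈ range (j + 1), partitionCount u) * Vpart s (n - j)) := by
  classical
  set P := ∑ u ∈ range (j + 1), partitionCount u with hP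
  set A := Finset.Nat.antidiagonalTuple s n with hA
  set B := Finset.Nat.antidiagonalTuple s (n - j) with hB
  have hex : ∀ x ∈ A, ∃ i, j ≤ x i := by
    intro x hx
    rw [hA, Finset.Nat.mem_antidiagonalTuple] at hx
    by_contra h
    push_neg at h
    have hle : ∀ i : Fin s, x i ≤ j - 1 := fun i => by have := h i; omega
    have : ∑ i, x i ≤ ∑ _i : Fin s, (j - 1) := Finset.sum_le_sum fun i _ => hle i
    simp only [Finset.sum_const, Finset.card_univ, Fintype.card_fin, smul_eq_mul] at this
    have hj1 : 1 ≤ j := by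
      by_contra hj0
      have : j = 0 := by omega
      subst this
      exact absurd (Nat.zero_le _) (not_le.mpr (h ⟨0, hs⟩))
    have : n ≤ s * (j - 1) := hx ▸ this
    have hjj : j - 1 + 1 = j := by omega
    have hmul : s * j = s * (j - 1) + s := by
      conv_lhs => rw [← hjj]
      exact Nat.mul_succ s (j - 1)
    omega
  let φ : (Fin s → ℕ) → Fin s × (Fin s → ℕ) := fun x =>
    if h : ∃ i, j ≤ x i then (h.choose, Function.update x h.choose (x h.choose - j))
    else (⟨0, hs⟩, x)
  have hφ : ∀ x ∈ A, ∃ i : Fin s, j ≤ x i ∧ φ x = (i, Function.update x i (x i - j)) := by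
    intro x hx
    obtain h := hex x hx
    refine ⟨h.choose, h.choose_spec, ?_⟩
    simp only [φ, dif_pos h]
  -- pointwise inequality
  have step1 : ∀ x ∈ A, ∏ i, partitionCount (x i) ≤ P * ∏ i, partitionCount ((φ x).2 i) := by
    intro x hx
    obtain ⟨i, hij, hphi⟩ := hφ x hx
    rw [hphi]
    have hprod : ∏ k, partitionCount (x k) = partitionCount (x i) * ∏ k ∈ univ.erase i, partitionCount (x k) :=
      (Finset.mul_prod_erase univ _ (mem_univ i)).symm
    have hprod2 : ∏ k, partitionCount (Function.update x i (x i - j) k)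
        = partitionCount (x i - j) * ∏ k ∈ univ.erase i, partitionCount (x k) := by
      rw [← Finset.mul_prod_erase univ _ (mem_univ i)]
      simp only [Function.update_self]
      congr 1
      apply Finset.prod_congr rfl
      intro k hk
      rw [Function.update_of_ne (Finset.ne_of_mem_erase hk)]
    rw [hprod, hprod2, ← mul_assoc]
    exact Nat.mul_le_mul_right _ (by
      have := split_card hij
      calc partitionCount (x i) ≤ partitionCount (x i - j) * P := this
        _ = P * partitionCount (x i - j) := mul_comm _ _)
  -- φ maps into univ ×ˢ B
  have step2 : ∀ x ∈ A, φ x ∈ (univ : Finset (Fin s)) ×ˢ B := by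
    intro x hx
    obtain ⟨i, hij, hphi⟩ := hφ x hx
    rw [hphi, Finset.mem_product]
    refine ⟨mem_univ _, ?_⟩
    rw [hB, Finset.Nat.mem_antidiagonalTuple]
    rw [Finset.sum_update_of_mem (mem_univ i), Finset.sdiff_singleton_eq_erase]
    have hsx : ∑ k, x k = n := by
      rw [hA, Finset.Nat.mem_antidiagonalTuple] at hx; exact hx
    have := Finset.add_sum_erase univ x (mem_univ i)
    omega
  -- injectivity on A
  have hinj : Set.InjOn φ A := by
    intro x hx y hy hxy
    obtain ⟨i, hij, hphix⟩ := hφ x hx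
    obtain ⟨i', hij', hphiy⟩ := hφ y hy
    rw [hphix, hphiy, Prod.mk.injEq] at hxy
    obtain ⟨rfl, h2⟩ := hxy
    funext k
    by_cases hk : k = i
    · subst hk
      have := congrFun h2 k
      simp only [Function.update_self] at this
      omega
    · have := congrFun h2 k
      simp only [Function.update_of_ne hk] at this
      exact this
  calc Vpart s n = ∑ x ∈ A, ∏ i, partitionCount (x i) := rfl
    _ ≤ ∑ x ∈ A, P * ∏ i, partitionCount ((φ x).2 i) := Finset.sum_le_sum step1
    _ = P * ∑ x ∈ A, ∏ i, partitionCount ((φ x).2 i) := by rw [Finset.mul_sum]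
    _ = P * ∑ z ∈ A.image φ, ∏ i, partitionCount (z.2 i) := by
        rw [Finset.sum_image (fun x hx y hy h => hinj hx hy h)]
    _ ≤ P * ∑ z ∈ (univ : Finset (Fin s)) ×ˢ B, ∏ i, partitionCount (z.2 i) := by
        apply Nat.mul_le_mul_left
        apply Finset.sum_le_sum_of_subset
        intro z hz
        rw [Finset.mem_image] at hz
        obtain ⟨x, hx, rfl⟩ := hz
        exact step2 x hx
    _ = P * (s * Vpart s (n - j)) := by
        rw [Finset.sum_product]
        simp only [Finset.sum_const, Finset.card_univ, Fintype.card_fin]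
        rw [Vpart]
        simp [mul_comm, hB]
    _ = s * (P * Vpart s (n - j)) := by ring

lemma natkey {s j n : ℕ} (hs : 1 ≤ s) (hj : j ≤ n / s) :
    Vpart s n ≤ s * ((j + 1) * (partitionCount j * Vpart s (n - j))) := by
  have hsj : s * j ≤ n := by
    calc s * j ≤ s * (n / s) := Nat.mul_le_mul_left _ hj
      _ ≤ n := Nat.mul_div_le n s
  have h1 := Vpart_le hs hsj
  have h2 : (∑ u ∈ range (j + 1), partitionCount u) ≤ (j + 1) * partitionCount j := by
    have := Finset.sum_le_card_nsmul (range (j + 1)) partitionCount (partitionCount j)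
      (fun u hu => partitionCount_mono (by have := Finset.mem_range.mp hu; omega))
    simpa [smul_eq_mul] using this
  calc Vpart s n ≤ s * ((∑ u ∈ range (j + 1), partitionCount u) * Vpart s (n - j)) := h1
    _ ≤ s * ((j + 1) * partitionCount j * Vpart s (n - j)) :=
        Nat.mul_le_mul_left _ (Nat.mul_le_mul_right _ h2)
    _ = s * ((j + 1) * (partitionCount j * Vpart s (n - j))) := by ring

lemma ratio_le (s : ℕ) (hs : 1 ≤ s) (n : ℕ) :
    (Vpart s n : ℝ) / (Vpart (s + 1) n : ℝ)
      ≤ (s : ℝ) / (∑ i ∈ range (n / s + 1), (1 : ℝ) / (i + 1)) := by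
  set M := n / s with hM
  set H : ℝ := ∑ i ∈ range (M + 1), (1 : ℝ) / (i + 1) with hH
  have hHpos : 0 < H := by
    apply Finset.sum_pos
    · intro i _
      positivity
    · exact Finset.nonempty_range_add_one
  have hspos : (0 : ℝ) < s := by exact_mod_cast hs
  have hVpartos : (0 : ℝ) < Vpart s n := by exact_mod_cast Vpart_pos hs n
  have hlow : (Vpart s n : ℝ) * (H / s) ≤ (Vpart (s + 1) n : ℝ) := by
    have hsum : (Vpart s n : ℝ) * (H / s) = ∑ j ∈ range (M + 1),
        (Vpart s n : ℝ) / ((s : ℝ) * (j + 1)) := by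
      rw [hH, Finset.sum_div, Finset.mul_sum]
      apply Finset.sum_congr rfl
      intro j _
      field_simp
    rw [hsum]
    have hstep : ∀ j ∈ range (M + 1),
        (Vpart s n : ℝ) / ((s : ℝ) * (j + 1)) ≤ ((partitionCount j * Vpart s (n - j) : ℕ) : ℝ) := by
      intro j hj
      have hjM : j ≤ M := by have := Finset.mem_range.mp hj; omega
      have hnat := natkey hs (hM ▸ hjM)
      rw [div_le_iff₀ (by positivity)]
      have : (Vpart s n : ℝ) ≤ (s : ℝ) * ((j + 1) * ((partitionCount j * Vpart s (n - j) : ℕ) : ℝ)) := by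
        exact_mod_cast hnat
      calc (Vpart s n : ℝ) ≤ _ := this
        _ = ((partitionCount j * Vpart s (n - j) : ℕ) : ℝ) * ((s : ℝ) * (j + 1)) := by push_cast; ring
    calc ∑ j ∈ range (M + 1), (Vpart s n : ℝ) / ((s : ℝ) * (j + 1))
        ≤ ∑ j ∈ range (M + 1), ((partitionCount j * Vpart s (n - j) : ℕ) : ℝ) :=
          Finset.sum_le_sum hstep
      _ = ((∑ j ∈ range (M + 1), partitionCount j * Vpart s (n - j) : ℕ) : ℝ) := by push_cast; rfl
      _ ≤ (Vpart (s + 1) n : ℝ) := by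
          exact_mod_cast Vpart_conv_ge (hM ▸ Nat.div_le_self n s)
  have hV1pos : (0 : ℝ) < Vpart (s + 1) n := by exact_mod_cast Vpart_pos (by omega) n
  have h2 : (0 : ℝ) < (Vpart s n : ℝ) * (H / s) := by positivity
  calc (Vpart s n : ℝ) / (Vpart (s + 1) n : ℝ)
      ≤ (Vpart s n : ℝ) / ((Vpart s n : ℝ) * (H / s)) := by
        apply div_le_div_of_nonneg_left (le_of_lt hVpartos) h2 hlow
    _ = (s : ℝ) / H := by
        field_simp

lemma harm_comp_tendsto (s : ℕ) (hs : 1 ≤ s) :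
    Tendsto (fun n : ℕ => ∑ i ∈ range (n / s + 1), (1 : ℝ) / (i + 1)) atTop atTop := by
  have h1 : Tendsto (fun k : ℕ => ∑ i ∈ range k, (1 / (i + 1) : ℝ)) atTop atTop :=
    Real.tendsto_sum_range_one_div_nat_succ_atTop
  have h2 : Tendsto (fun n : ℕ => n / s + 1) atTop atTop := by
    apply Filter.tendsto_atTop_atTop.mpr
    intro b
    refine ⟨b * s, fun n hn => ?_⟩
    have : b ≤ n / s := Nat.le_div_iff_mul_le (by omega) |>.mpr hn
    omega
  exact h1.comp h2

lemma main_ratio_tendsto (s : ℕ) (hs : 1 ≤ s) :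
    Tendsto (fun n : ℕ => (Vpart s n : ℝ) / (Vpart (s + 1) n : ℝ)) atTop (nhds 0) := by
  have hbound : Tendsto
      (fun n : ℕ => (s : ℝ) / (∑ i ∈ range (n / s + 1), (1 : ℝ) / (i + 1)))
      atTop (nhds 0) :=
    Filter.Tendsto.div_atTop tendsto_const_nhds (harm_comp_tendsto s hs)
  apply squeeze_zero (fun n => by positivity) (fun n => ratio_le s hs n) hbound

theorem stmt19 (r : ℕ) (hr : 1 ≤ r) :
    Filter.Tendsto (fun n : ℕ => (Vpart (r - 1) n : ℝ) / (Vpart r n : ℝ))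
      Filter.atTop (nhds 0) := by
  match r, hr with
  | 1, _ =>
    have h : (fun _ : ℕ => (0 : ℝ)) =ᶠ[Filter.atTop]
        fun n : ℕ => (Vpart 0 n : ℝ) / (Vpart 1 n : ℝ) := by
      filter_upwards [Filter.eventually_ge_atTop 1] with n hn
      obtain ⟨m, rfl⟩ : ∃ m, n = m + 1 := ⟨n - 1, by omega⟩
      rw [Vpart]
      simp
    exact Filter.Tendsto.congr' h tendsto_const_nhds
  | (s + 2), _ => exact main_ratio_tendsto (s + 1) (by omega)
end
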